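/- arXiv:1201.0874 — 2 statements merged into one kernel-verified Lean document; each statement's English description precedes it below -/
import Mathlib

section
/- Context lemma for λ_S: contextual equivalence, evaluation-context-based contextual equivalence, and applicative bisimilarity all coincide: ≡C = ≡E = ≈. -/
namespace LamS

/-- Terms of the λ-calculus with shift and reset, in de Bruijn representation.
    `lam` and `shift` bind variable 0. -/
inductive Tm : Type
  | var : ℕ → Tm
  | lam : Tm → Tm
  | app : Tm → Tm → Tm
  | shift : Tm → Tm
  | reset : Tm → Tm
  deriving DecidableEq

open Tm

/-- Lift (shift up) free de Bruijn indices `≥ c` by `d`. -/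
def liftT (d : ℕ) : ℕ → Tm → Tm
  | c, var n => if n < c then var n else var (n + d)
  | c, lam t => lam (liftT d (c+1) t)
  | c, app a b => app (liftT d c a) (liftT d c b)
  | c, shift t => shift (liftT d (c+1) t)
  | c, reset t => reset (liftT d c t)

/-- Capture-avoiding substitution `t[j := s]` (de Bruijn). -/
def substT : ℕ → Tm → Tm → Tm
  | j, s, var n => if n = j then liftT j 0 s else if j < n then var (n-1) else var n
  | j, s, lam t => lam (substT (j+1) s t)
  | j, s, app a b => app (substT j s a) (substT j s b)
  | j, s, shift t => shift (substT (j+1) s t)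
  | j, s, reset t => reset (substT j s t)

/-- Values are λ-abstractions. -/
def IsValue (t : Tm) : Prop := ∃ b, t = lam b

/-- All free variables are `< n`. -/
def ClosedUnder : ℕ → Tm → Prop
  | n, var m => m < n
  | n, lam t => ClosedUnder (n+1) t
  | n, app a b => ClosedUnder n a ∧ ClosedUnder n b
  | n, shift t => ClosedUnder (n+1) t
  | n, reset t => ClosedUnder n t

def Closed (t : Tm) : Prop := ClosedUnder 0 t

/-- Pure evaluation contexts, interpreted inside-out:
    `appV b E` is `E[(λ.b) []]` and `appL E t` is `E[[] t]`. -/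
inductive PCtx : Type
  | hole : PCtx
  | appV : Tm → PCtx → PCtx
  | appL : PCtx → Tm → PCtx
  deriving DecidableEq

def PCtx.plug : PCtx → Tm → Tm
  | .hole, t => t
  | .appV b E, t => E.plug (app (lam b) t)
  | .appL E s, t => E.plug (app t s)

def PCtx.liftC (d : ℕ) : ℕ → PCtx → PCtx
  | _, .hole => .hole
  | c, .appV b E => .appV (liftT d (c+1) b) (PCtx.liftC d c E)
  | c, .appL E s => .appL (PCtx.liftC d c E) (liftT d c s)

/-- Composition of pure contexts: `(E.comp E').plug t = E.plug (E'.plug t)`. -/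
def PCtx.comp : PCtx → PCtx → PCtx
  | E, .hole => E
  | E, .appV b E' => .appV b (E.comp E')
  | E, .appL E' s => .appL (E.comp E') s

/-- The captured delimited continuation `λx.⟨E[x]⟩`. -/
def contOf (E : PCtx) : Tm := lam (reset ((PCtx.liftC 1 0 E).plug (var 0)))

/-- Call-by-value evaluation contexts, interpreted inside-out. -/
inductive ECtx : Type
  | hole : ECtx
  | appV : Tm → ECtx → ECtx
  | appL : ECtx → Tm → ECtx
  | resetC : ECtx → ECtx
  deriving DecidableEq

def ECtx.plug : ECtx → Tm → Tm
  | .hole, t => t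
  | .appV b F, t => F.plug (app (lam b) t)
  | .appL F s, t => F.plug (app t s)
  | .resetC F, t => F.plug (reset t)

def ClosedECtx : ECtx → Prop
  | .hole => True
  | .appV b F => ClosedUnder 1 b ∧ ClosedECtx F
  | .appL F s => ClosedECtx F ∧ Closed s
  | .resetC F => ClosedECtx F

/-- One-step reduction of λ_S. -/
inductive Red : Tm → Tm → Prop
  | beta (F : ECtx) (t v : Tm) (hv : IsValue v) :
      Red (F.plug (app (lam t) v)) (F.plug (substT 0 v t))
  | cap (F : ECtx) (E : PCtx) (t : Tm) :
      Red (F.plug (reset (E.plug (shift t)))) (F.plug (reset (substT 0 (contOf E) t)))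
  | res (F : ECtx) (v : Tm) (hv : IsValue v) :
      Red (F.plug (reset v)) (F.plug v)

def RedStar : Tm → Tm → Prop := Relation.ReflTransGen Red

/-- A term is stuck if it is not a value and cannot reduce. -/
def Stuck (t : Tm) : Prop := ¬ IsValue t ∧ ∀ u, ¬ Red t u

/-- Evaluation: reduce to an irreducible term. -/
def Eval (t t' : Tm) : Prop := RedStar t t' ∧ ∀ u, ¬ Red t' u

def IsRedex (r : Tm) : Prop :=
  (∃ t v, IsValue v ∧ r = app (lam t) v) ∨
  (∃ E s, r = reset (PCtx.plug E (shift s))) ∨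
  (∃ v, IsValue v ∧ r = reset v)

/-- Labels of the LTS. -/
inductive Label : Type
  | tau : Label
  | val : Tm → Label
  | ctx : PCtx → Label

/-- The labelled transition system for λ_S. -/
inductive Step : Tm → Label → Tm → Prop
  | beta {t v : Tm} (hv : IsValue v) :
      Step (app (lam t) v) .tau (substT 0 v t)
  | resetVal {v : Tm} (hv : IsValue v) :
      Step (reset v) .tau v
  | appL {t0 t0' t1 : Tm} :
      Step t0 .tau t0' → Step (app t0 t1) .tau (app t0' t1)
  | appR {v t t' : Tm} (hv : IsValue v) :
      Step t .tau t' → Step (app v t) .tau (app v t')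
  | resetT {t t' : Tm} :
      Step t .tau t' → Step (reset t) .tau (reset t')
  | resetCap {t t' : Tm} :
      Step t (.ctx .hole) t' → Step (reset t) .tau t'
  | lamApp {t v : Tm} (hv : IsValue v) :
      Step (lam t) (.val v) (substT 0 v t)
  | shiftCap {t : Tm} (E : PCtx) :
      Step (shift t) (.ctx E) (reset (substT 0 (contOf E) t))
  | capL {t0 t0' t1 : Tm} {E : PCtx} :
      Step t0 (.ctx (.appL E t1)) t0' → Step (app t0 t1) (.ctx E) t0'
  | capR {b t t' : Tm} {E : PCtx} :
      Step t (.ctx (.appV b E)) t' → Step (app (lam b) t) (.ctx E) t'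

def TauStar : Tm → Tm → Prop := Relation.ReflTransGen (fun a b => Step a .tau b)

/-- Weak delay transition: τ-steps, then an `l`-step if `l ≠ τ`. -/
def Weak (t : Tm) (l : Label) (t' : Tm) : Prop :=
  match l with
  | .tau => TauStar t t'
  | _ => ∃ u, TauStar t u ∧ Step u l t'

/-- Applicative simulation. -/
def IsSim (R : Tm → Tm → Prop) : Prop :=
  ∀ ⦃t0 t1⦄, R t0 t1 → ∀ ⦃l t0'⦄, Step t0 l t0' →
    ∃ t1', Weak t1 l t1' ∧ R t0' t1'

def IsBisim (R : Tm → Tm → Prop) : Prop := IsSim R ∧ IsSim (flip R)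

/-- Applicative bisimilarity: the largest applicative bisimulation. -/
def Bisim (t0 t1 : Tm) : Prop := ∃ R, IsBisim R ∧ R t0 t1

/-- Big-step applicative simulation. -/
def IsBigSim (R : Tm → Tm → Prop) : Prop :=
  ∀ ⦃t0 t1⦄, R t0 t1 → ∀ ⦃l t0'⦄, l ≠ Label.tau → Weak t0 l t0' →
    ∃ t1', Weak t1 l t1' ∧ R t0' t1'

def IsBigBisim (R : Tm → Tm → Prop) : Prop := IsBigSim R ∧ IsBigSim (flip R)

/-- Big-step applicative bisimilarity. -/
def BigBisim (t0 t1 : Tm) : Prop := ∃ R, IsBigBisim R ∧ R t0 t1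

/-- General contexts. -/
inductive Ctx : Type
  | hole : Ctx
  | lam : Ctx → Ctx
  | appL : Ctx → Tm → Ctx
  | appR : Tm → Ctx → Ctx
  | shift : Ctx → Ctx
  | reset : Ctx → Ctx

/-- Plugging a term in a general context (free variables may be captured). -/
def Ctx.plug : Ctx → Tm → Tm
  | .hole, t => t
  | .lam C, t => Tm.lam (C.plug t)
  | .appL C s, t => Tm.app (C.plug t) s
  | .appR s C, t => Tm.app s (C.plug t)
  | .shift C, t => Tm.shift (C.plug t)
  | .reset C, t => Tm.reset (C.plug t)

def CtxClosedUnder : ℕ → Ctx → Prop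
  | _, .hole => True
  | n, .lam C => CtxClosedUnder (n+1) C
  | n, .appL C s => CtxClosedUnder n C ∧ ClosedUnder n s
  | n, .appR s C => ClosedUnder n s ∧ CtxClosedUnder n C
  | n, .shift C => CtxClosedUnder (n+1) C
  | n, .reset C => CtxClosedUnder n C

def ClosedCtx (C : Ctx) : Prop := CtxClosedUnder 0 C

def EvalsToValue (t : Tm) : Prop := ∃ v, IsValue v ∧ Eval t v

def EvalsToStuck (t : Tm) : Prop := ∃ s, Stuck s ∧ Eval t s

/-- Contextual equivalence on closed terms. -/
def CtxEquiv (t0 t1 : Tm) : Prop :=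
  ∀ C : Ctx, ClosedCtx C →
    (EvalsToValue (C.plug t0) ↔ EvalsToValue (C.plug t1)) ∧
    (EvalsToStuck (C.plug t0) ↔ EvalsToStuck (C.plug t1))

/-- Contextual equivalence restricted to evaluation contexts. -/
def ECtxEquiv (t0 t1 : Tm) : Prop :=
  ∀ F : ECtx, ClosedECtx F →
    (EvalsToValue (F.plug t0) ↔ EvalsToValue (F.plug t1)) ∧
    (EvalsToStuck (F.plug t0) ↔ EvalsToStuck (F.plug t1))

/-- Lifting a substitution under a binder. -/
def liftSub (σ : ℕ → Tm) : ℕ → Tm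
  | 0 => var 0
  | n+1 => liftT 1 0 (σ n)

/-- Apply a substitution to all free variables of a term. -/
def applySub (σ : ℕ → Tm) : Tm → Tm
  | var n => σ n
  | lam t => lam (applySub (liftSub σ) t)
  | app a b => app (applySub σ a) (applySub σ b)
  | shift t => shift (applySub (liftSub σ) t)
  | reset t => reset (applySub σ t)

/-- A closing substitution maps every variable to a closed value. -/
def ClosingSub (σ : ℕ → Tm) : Prop := ∀ n, IsValue (σ n) ∧ Closed (σ n)

/-- Open extension of a relation on closed terms. -/
def OpenExt (R : Tm → Tm → Prop) (t0 t1 : Tm) : Prop :=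
  ∀ σ, ClosingSub σ → R (applySub σ t0) (applySub σ t1)

/-- Howe's closure of applicative bisimilarity (compatible refinement rules inlined). -/
inductive Howe : Tm → Tm → Prop
  | base {t0 t1} : OpenExt Bisim t0 t1 → Howe t0 t1
  | right {t0 t2 t1} : Howe t0 t2 → OpenExt Bisim t2 t1 → Howe t0 t1
  | compVar (n : ℕ) : Howe (var n) (var n)
  | compLam {t0 t1} : Howe t0 t1 → Howe (lam t0) (lam t1)
  | compApp {a0 a1 b0 b1} : Howe a0 a1 → Howe b0 b1 → Howe (app a0 b0) (app a1 b1)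
  | compShift {t0 t1} : Howe t0 t1 → Howe (shift t0) (shift t1)
  | compReset {t0 t1} : Howe t0 t1 → Howe (reset t0) (reset t1)

/-- Howe's closure restricted to closed terms. -/
def HoweC (t0 t1 : Tm) : Prop := Closed t0 ∧ Closed t1 ∧ Howe t0 t1

/-- Extension of Howe's closure to pure contexts. -/
inductive PCtxHowe : PCtx → PCtx → Prop
  | hole : PCtxHowe .hole .hole
  | appV {b0 b1 E0 E1} : Howe b0 b1 → PCtxHowe E0 E1 → PCtxHowe (.appV b0 E0) (.appV b1 E1)
  | appL {E0 E1 t0 t1} : PCtxHowe E0 E1 → Howe t0 t1 → PCtxHowe (.appL E0 t0) (.appL E1 t1)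

/-- Extension of Howe's closure to labels. -/
def LabHowe : Label → Label → Prop
  | .tau, .tau => True
  | .val v0, .val v1 => Closed v0 ∧ Closed v1 ∧ Howe v0 v1
  | .ctx E0, .ctx E1 => PCtxHowe E0 E1
  | _, _ => False

/-- ω = λx. x x -/
def omegaTm : Tm := lam (app (var 0) (var 0))

/-- Ω = ω ω, the standard diverging term. -/
def OmegaTm : Tm := app omegaTm omegaTm

/-- Every τ-reachable term can do a τ-step: only infinite τ-sequences. -/
def Diverges (t : Tm) : Prop := ∀ u, TauStar t u → ∃ u', Step u .tau u'

/-- No weak non-τ transition. -/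
def NoObs (t : Tm) : Prop := ∀ l t', l ≠ Label.tau → ¬ Weak t l t'

end LamS
namespace LamS
open Tm

/-! ### Block 1: substitution calculus -/

def liftRen (ρ : ℕ → ℕ) : ℕ → ℕ
  | 0 => 0
  | n+1 => ρ n + 1

def renT (ρ : ℕ → ℕ) : Tm → Tm
  | .var n => .var (ρ n)
  | .lam t => .lam (renT (liftRen ρ) t)
  | .app a b => .app (renT ρ a) (renT ρ b)
  | .shift t => .shift (renT (liftRen ρ) t)
  | .reset t => .reset (renT ρ t)

lemma renT_ext {ρ ρ' : ℕ → ℕ} (h : ∀ n, ρ n = ρ' n) (t : Tm) : renT ρ t = renT ρ' t := by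
  have : ρ = ρ' := funext h
  rw [this]

lemma applySub_ext {σ σ' : ℕ → Tm} (h : ∀ n, σ n = σ' n) (t : Tm) :
    applySub σ t = applySub σ' t := by
  have : σ = σ' := funext h
  rw [this]

lemma liftT_eq_renT (d : ℕ) : ∀ (c : ℕ) (t : Tm),
    liftT d c t = renT (fun n => if n < c then n else n + d) t := by
  intro c t
  induction t generalizing c with
  | var n => simp only [liftT, renT]; split <;> rfl
  | lam t ih =>
      simp only [liftT, renT, ih]
      congr 1
      apply renT_ext
      intro n; cases n with
      | zero => simp [liftRen]
      | succ n => simp only [liftRen]; split <;> split <;> omega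
  | app a b iha ihb => simp [liftT, renT, iha, ihb]
  | shift t ih =>
      simp only [liftT, renT, ih]
      congr 1
      apply renT_ext
      intro n; cases n with
      | zero => simp [liftRen]
      | succ n => simp only [liftRen]; split <;> split <;> omega
  | reset t ih => simp [liftT, renT, ih]

lemma renT_renT (ρ₂ ρ₁ : ℕ → ℕ) (t : Tm) :
    renT ρ₂ (renT ρ₁ t) = renT (fun n => ρ₂ (ρ₁ n)) t := by
  induction t generalizing ρ₁ ρ₂ with
  | var n => simp [renT]
  | lam t ih =>
      simp only [renT, ih]
      congr 1
      apply renT_ext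
      intro n; cases n <;> simp [liftRen]
  | app a b iha ihb => simp [renT, iha, ihb]
  | shift t ih =>
      simp only [renT, ih]
      congr 1
      apply renT_ext
      intro n; cases n <;> simp [liftRen]
  | reset t ih => simp [renT, ih]

lemma liftT_one_zero (t : Tm) : liftT 1 0 t = renT (fun n => n + 1) t := by
  rw [liftT_eq_renT]; apply renT_ext; intro n; simp

lemma applySub_renT (σ : ℕ → Tm) (ρ : ℕ → ℕ) (t : Tm) :
    applySub σ (renT ρ t) = applySub (fun n => σ (ρ n)) t := by
  induction t generalizing σ ρ with
  | var n => simp [renT, applySub]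
  | lam t ih =>
      simp only [renT, applySub, ih]
      congr 1
      apply applySub_ext
      intro n; cases n <;> simp [liftRen, liftSub]
  | app a b iha ihb => simp [renT, applySub, iha, ihb]
  | shift t ih =>
      simp only [renT, applySub, ih]
      congr 1
      apply applySub_ext
      intro n; cases n <;> simp [liftRen, liftSub]
  | reset t ih => simp [renT, applySub, ih]

lemma renT_applySub (ρ : ℕ → ℕ) (σ : ℕ → Tm) (t : Tm) :
    renT ρ (applySub σ t) = applySub (fun n => renT ρ (σ n)) t := by
  induction t generalizing σ ρ with
  | var n => simp [renT, applySub]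
  | lam t ih =>
      simp only [applySub, renT, ih]
      congr 1
      apply applySub_ext
      intro n; cases n with
      | zero => simp [liftSub, renT, liftRen]
      | succ n =>
          simp only [liftSub, liftT_one_zero, renT_renT]
          apply renT_ext
          intro m; simp [liftRen]
  | app a b iha ihb => simp [applySub, renT, iha, ihb]
  | shift t ih =>
      simp only [applySub, renT, ih]
      congr 1
      apply applySub_ext
      intro n; cases n with
      | zero => simp [liftSub, renT, liftRen]
      | succ n =>
          simp only [liftSub, liftT_one_zero, renT_renT]
          apply renT_ext
          intro m; simp [liftRen]
  | reset t ih => simp [applySub, renT, ih]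

lemma applySub_applySub (σ₂ σ₁ : ℕ → Tm) (t : Tm) :
    applySub σ₂ (applySub σ₁ t) = applySub (fun n => applySub σ₂ (σ₁ n)) t := by
  induction t generalizing σ₁ σ₂ with
  | var n => simp [applySub]
  | lam t ih =>
      simp only [applySub, ih]
      congr 1
      apply applySub_ext
      intro n; cases n with
      | zero => simp [liftSub, applySub]
      | succ n =>
          simp only [liftSub, liftT_one_zero, renT_applySub, applySub_renT]
  | app a b iha ihb => simp [applySub, iha, ihb]
  | shift t ih =>
      simp only [applySub, ih]
      congr 1
      apply applySub_ext
      intro n; cases n with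
      | zero => simp [liftSub, applySub]
      | succ n =>
          simp only [liftSub, liftT_one_zero, renT_applySub, applySub_renT]
  | reset t ih => simp [applySub, ih]

/-- `substT` as a simultaneous substitution. -/
def sub1 (j : ℕ) (s : Tm) : ℕ → Tm :=
  fun n => if n = j then liftT j 0 s else if j < n then .var (n-1) else .var n

lemma liftT_var (d c n : ℕ) : liftT d c (.var n) = if n < c then .var n else .var (n+d) := rfl

lemma liftT_succ_zero (j : ℕ) (s : Tm) : liftT 1 0 (liftT j 0 s) = liftT (j+1) 0 s := by
  simp only [liftT_eq_renT, renT_renT]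
  apply renT_ext; intro m; simp; omega

lemma liftSub_sub1 (j : ℕ) (s : Tm) (n : ℕ) : liftSub (sub1 j s) n = sub1 (j+1) s n := by
  cases n with
  | zero => simp [liftSub, sub1]
  | succ n =>
      simp only [liftSub, sub1]
      by_cases h : n = j
      · subst h
        rw [if_pos rfl, if_pos rfl, liftT_succ_zero]
      · rw [if_neg h, if_neg (by omega : ¬ n + 1 = j + 1)]
        by_cases h2 : j < n
        · rw [if_pos h2, if_pos (by omega : j + 1 < n + 1), liftT_var, if_neg (by omega)]
          congr 1; omega
        · rw [if_neg h2, if_neg (by omega : ¬ j + 1 < n + 1), liftT_var, if_neg (by omega)]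

lemma substT_eq_applySub (j : ℕ) (s t : Tm) :
    substT j s t = applySub (sub1 j s) t := by
  induction t generalizing j with
  | var n => simp [substT, applySub, sub1]
  | lam t ih =>
      simp only [substT, applySub, ih]
      congr 1
      exact (applySub_ext (liftSub_sub1 j s) t).symm
  | app a b iha ihb => simp [substT, applySub, iha, ihb]
  | shift t ih =>
      simp only [substT, applySub, ih]
      congr 1
      exact (applySub_ext (liftSub_sub1 j s) t).symm
  | reset t ih => simp [substT, applySub, ih]

end LamS
namespace LamS
open Tm

/-! ### Block 1b: closedness lemmas -/

lemma closedUnder_mono : ∀ (t : Tm) {n m : ℕ}, n ≤ m → ClosedUnder n t → ClosedUnder m t := by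
  intro t
  induction t with
  | var k => intro n m h hc; simp only [ClosedUnder] at *; omega
  | lam t ih => intro n m h hc; exact ih (by omega) hc
  | app a b iha ihb => intro n m h hc; exact ⟨iha h hc.1, ihb h hc.2⟩
  | shift t ih => intro n m h hc; exact ih (by omega) hc
  | reset t ih => intro n m h hc; exact ih h hc

lemma liftT_closed : ∀ (t : Tm) {c : ℕ} (d : ℕ), ClosedUnder c t → liftT d c t = t := by
  intro t
  induction t with
  | var k => intro c d hc; simp only [ClosedUnder] at hc; simp [liftT, hc]
  | lam t ih => intro c d hc; simp [liftT, ih d hc]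
  | app a b iha ihb => intro c d hc; simp [liftT, iha d hc.1, ihb d hc.2]
  | shift t ih => intro c d hc; simp [liftT, ih d hc]
  | reset t ih => intro c d hc; simp [liftT, ih d hc]

lemma closedUnder_liftT : ∀ (t : Tm) {n c : ℕ} (d : ℕ), c ≤ n → ClosedUnder n t →
    ClosedUnder (n+d) (liftT d c t) := by
  intro t
  induction t with
  | var k =>
      intro n c d h hc; simp only [ClosedUnder] at hc
      simp only [liftT]; split <;> simp only [ClosedUnder] <;> omega
  | lam t ih =>
      intro n c d h hc
      have := ih (c := c+1) d (by omega) hc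
      simpa [liftT, ClosedUnder, Nat.add_right_comm] using this
  | app a b iha ihb =>
      intro n c d h hc; exact ⟨iha d h hc.1, ihb d h hc.2⟩
  | shift t ih =>
      intro n c d h hc
      have := ih (c := c+1) d (by omega) hc
      simpa [liftT, ClosedUnder, Nat.add_right_comm] using this
  | reset t ih =>
      intro n c d h hc; exact ih d h hc

lemma substT_closed : ∀ (t : Tm) {j : ℕ} (s : Tm), ClosedUnder j t → substT j s t = t := by
  intro t
  induction t with
  | var k =>
      intro j s hc; simp only [ClosedUnder] at hc
      simp only [substT]
      rw [if_neg (by omega), if_neg (by omega)]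
  | lam t ih => intro j s hc; simp [substT, ih s hc]
  | app a b iha ihb => intro j s hc; simp [substT, iha s hc.1, ihb s hc.2]
  | shift t ih => intro j s hc; simp [substT, ih s hc]
  | reset t ih => intro j s hc; simp [substT, ih s hc]

lemma closedUnder_substT : ∀ (t : Tm) {j : ℕ} {s : Tm}, ClosedUnder (j+1) t → Closed s →
    ClosedUnder j (substT j s t) := by
  intro t
  induction t with
  | var k =>
      intro j s hc hs; simp only [ClosedUnder] at hc
      simp only [substT]
      by_cases h : k = j
      · rw [if_pos h]
        have := closedUnder_liftT s (n := 0) (c := 0) j (by omega) hs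
        simpa using this
      · rw [if_neg h, if_neg (by omega)]
        simp only [ClosedUnder]; omega
  | lam t ih => intro j s hc hs; exact ih hc hs
  | app a b iha ihb => intro j s hc hs; exact ⟨iha hc.1 hs, ihb hc.2 hs⟩
  | shift t ih => intro j s hc hs; exact ih hc hs
  | reset t ih => intro j s hc hs; exact ih hc hs

lemma renT_id (t : Tm) : renT (fun n => n) t = t := by
  induction t with
  | var n => rfl
  | lam t ih =>
      simp only [renT]
      rw [renT_ext (ρ' := fun n => n) (fun n => by cases n <;> simp [liftRen]) t, ih]
  | app a b iha ihb => simp [renT, iha, ihb]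
  | shift t ih =>
      simp only [renT]
      rw [renT_ext (ρ' := fun n => n) (fun n => by cases n <;> simp [liftRen]) t, ih]
  | reset t ih => simp [renT, ih]

lemma liftT_zero (c : ℕ) (t : Tm) : liftT 0 c t = t := by
  rw [liftT_eq_renT, renT_ext (ρ' := fun n => n) (fun n => by show (if n < c then n else n + 0) = n; split <;> omega) t, renT_id]

lemma applySub_congr_below : ∀ (t : Tm) {k : ℕ} {σ σ' : ℕ → Tm}, ClosedUnder k t →
    (∀ n < k, σ n = σ' n) → applySub σ t = applySub σ' t := by
  intro t
  induction t with
  | var n => intro k σ σ' hc h; exact h n hc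
  | lam t ih =>
      intro k σ σ' hc h
      simp only [applySub]; congr 1
      refine ih hc (fun n hn => ?_)
      cases n with
      | zero => rfl
      | succ n => simp only [liftSub]; rw [h n (by omega)]
  | app a b iha ihb =>
      intro k σ σ' hc h; simp only [applySub]
      rw [iha hc.1 h, ihb hc.2 h]
  | shift t ih =>
      intro k σ σ' hc h
      simp only [applySub]; congr 1
      refine ih hc (fun n hn => ?_)
      cases n with
      | zero => rfl
      | succ n => simp only [liftSub]; rw [h n (by omega)]
  | reset t ih =>
      intro k σ σ' hc h; simp only [applySub]
      rw [ih hc h]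

lemma applySub_id : ∀ (t : Tm), applySub (fun n => .var n) t = t := by
  intro t
  induction t with
  | var n => rfl
  | lam t ih =>
      simp only [applySub]
      rw [applySub_ext (σ' := fun n => .var n) (fun n => by cases n <;> simp [liftSub, liftT]) t, ih]
  | app a b iha ihb => simp [applySub, iha, ihb]
  | shift t ih =>
      simp only [applySub]
      rw [applySub_ext (σ' := fun n => .var n) (fun n => by cases n <;> simp [liftSub, liftT]) t, ih]
  | reset t ih => simp [applySub, ih]

lemma applySub_eq_self {t : Tm} {k : ℕ} {σ : ℕ → Tm} (hc : ClosedUnder k t)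
    (h : ∀ n < k, σ n = .var n) : applySub σ t = t := by
  rw [applySub_congr_below t hc h, applySub_id]

lemma applySub_closed {t : Tm} (hc : Closed t) (σ : ℕ → Tm) : applySub σ t = t :=
  applySub_eq_self hc (by omega)

lemma closedUnder_applySub : ∀ (t : Tm) {k : ℕ} {σ : ℕ → Tm},
    (∀ n, ClosedUnder k (σ n)) → ClosedUnder k (applySub σ t) := by
  intro t
  induction t with
  | var n => intro k σ h; exact h n
  | lam t ih =>
      intro k σ h
      refine ih (fun n => ?_)
      cases n with
      | zero => simp [liftSub, ClosedUnder]
      | succ n =>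
          simp only [liftSub]
          have := closedUnder_liftT (σ n) (n := k) (c := 0) 1 (by omega) (h n)
          exact this
  | app a b iha ihb => intro k σ h; exact ⟨iha h, ihb h⟩
  | shift t ih =>
      intro k σ h
      refine ih (fun n => ?_)
      cases n with
      | zero => simp [liftSub, ClosedUnder]
      | succ n =>
          simp only [liftSub]
          exact closedUnder_liftT (σ n) (n := k) (c := 0) 1 (by omega) (h n)
  | reset t ih => intro k σ h; exact ih h

lemma closed_applySub {t : Tm} {σ : ℕ → Tm} (h : ClosingSub σ) : Closed (applySub σ t) :=
  closedUnder_applySub t (fun n => (h n).2)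

lemma applySub_applySub_closing {σ σc : ℕ → Tm} (h : ∀ n, Closed (σc n)) (t : Tm) :
    applySub σ (applySub σc t) = applySub σc t := by
  rw [applySub_applySub]
  exact applySub_ext (fun n => applySub_closed (h n) σ) t

/-- substituting then closing = closing an extended substitution -/
lemma applySub_substT (σ : ℕ → Tm) (j : ℕ) (w t : Tm) :
    applySub σ (substT j w t) =
      applySub (fun n => if n = j then applySub σ (liftT j 0 w)
        else if j < n then σ (n-1) else σ n) t := by
  rw [substT_eq_applySub, applySub_applySub]
  apply applySub_ext
  intro n
  simp only [sub1]
  by_cases h : n = j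
  · rw [if_pos h, if_pos h]
  · rw [if_neg h, if_neg h]
    by_cases h2 : j < n
    · rw [if_pos h2, if_pos h2]; rfl
    · rw [if_neg h2, if_neg h2]; rfl

lemma applySub_closedUnder1 {t : Tm} (hc : ClosedUnder 1 t) (σ : ℕ → Tm) :
    applySub σ t = substT 0 (σ 0) t := by
  rw [substT_eq_applySub]
  refine applySub_congr_below t hc (fun n hn => ?_)
  cases n with
  | zero => simp [sub1, liftT_zero]
  | succ n => omega

lemma isValue_applySub {v : Tm} (hv : IsValue v) (σ : ℕ → Tm) : IsValue (applySub σ v) := by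
  obtain ⟨b, rfl⟩ := hv; exact ⟨_, rfl⟩

lemma isValue_liftT {v : Tm} (hv : IsValue v) (d c : ℕ) : IsValue (liftT d c v) := by
  obtain ⟨b, rfl⟩ := hv; exact ⟨_, rfl⟩

lemma isValue_substT {v : Tm} (hv : IsValue v) (j : ℕ) (s : Tm) : IsValue (substT j s v) := by
  obtain ⟨b, rfl⟩ := hv; exact ⟨_, rfl⟩

end LamS
namespace LamS
open Tm

/-! ### Block 2: operational toolkit -/

def ECtx.comp (F : ECtx) : ECtx → ECtx
  | .hole => F
  | .appV b G => .appV b (F.comp G)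
  | .appL G s => .appL (F.comp G) s
  | .resetC G => .resetC (F.comp G)

lemma ECtx.comp_plug (F : ECtx) : ∀ (G : ECtx) (t : Tm),
    (F.comp G).plug t = F.plug (G.plug t) := by
  intro G
  induction G with
  | hole => intro t; rfl
  | appV b G ih => intro t; exact ih _
  | appL G s ih => intro t; exact ih _
  | resetC G ih => intro t; exact ih _

lemma PCtx.comp_plug (E : PCtx) : ∀ (G : PCtx) (t : Tm),
    (E.comp G).plug t = E.plug (G.plug t) := by
  intro G
  induction G with
  | hole => intro t; rfl
  | appV b G ih => intro t; exact ih _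
  | appL G s ih => intro t; exact ih _

lemma PCtx.comp_hole_left : ∀ (E : PCtx), PCtx.comp .hole E = E := by
  intro E
  induction E with
  | hole => rfl
  | appV b E ih => simp [PCtx.comp, ih]
  | appL E s ih => simp [PCtx.comp, ih]

lemma PCtx.comp_assoc : ∀ (A B C : PCtx), (A.comp B).comp C = A.comp (B.comp C) := by
  intro A B C
  induction C with
  | hole => rfl
  | appV b C ih => simp [PCtx.comp, ih]
  | appL C s ih => simp [PCtx.comp, ih]

def PCtx.toECtx : PCtx → ECtx
  | .hole => .hole
  | .appV b E => .appV b E.toECtx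
  | .appL E s => .appL E.toECtx s

lemma PCtx.toECtx_plug : ∀ (E : PCtx) (t : Tm), E.toECtx.plug t = E.plug t := by
  intro E
  induction E with
  | hole => intro t; rfl
  | appV b E ih => intro t; exact ih _
  | appL E s ih => intro t; exact ih _

/-- Red is preserved by evaluation contexts. -/
lemma red_plug {t u : Tm} (F : ECtx) (h : Red t u) : Red (F.plug t) (F.plug u) := by
  cases h with
  | beta F' t v hv =>
      rw [← ECtx.comp_plug, ← ECtx.comp_plug]; exact Red.beta _ _ _ hv
  | cap F' E t =>
      rw [← ECtx.comp_plug, ← ECtx.comp_plug]; exact Red.cap _ _ _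
  | res F' v hv =>
      rw [← ECtx.comp_plug, ← ECtx.comp_plug]; exact Red.res _ _ hv

/-- τ-steps are preserved by evaluation contexts. -/
lemma step_tau_plug : ∀ (F : ECtx) {t t' : Tm}, Step t .tau t' →
    Step (F.plug t) .tau (F.plug t') := by
  intro F
  induction F with
  | hole => intro t t' h; exact h
  | appV b F ih => intro t t' h; exact ih (Step.appR ⟨b, rfl⟩ h)
  | appL F s ih => intro t t' h; exact ih (Step.appL h)
  | resetC F ih => intro t t' h; exact ih (Step.resetT h)

/-- ctx-steps lift through pure contexts. -/
lemma step_ctx_plug : ∀ (E : PCtx) {E₀ : PCtx} {r u : Tm},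
    Step r (.ctx (E₀.comp E)) u → Step (E.plug r) (.ctx E₀) u := by
  intro E
  induction E with
  | hole => intro E₀ r u h; exact h
  | appV b E ih =>
      intro E₀ r u h
      exact ih (Step.capR h)
  | appL E s ih =>
      intro E₀ r u h
      exact ih (Step.capL h)

/-- the canonical ctx-step of a control-stuck term. -/
lemma step_ctx_of_decomp (E₀ : PCtx) (s : Tm) (E : PCtx) :
    Step (E₀.plug (shift s)) (.ctx E) (reset (substT 0 (contOf (E.comp E₀)) s)) := by
  apply step_ctx_plug
  exact Step.shiftCap _

lemma ctx_step_inv : ∀ {t : Tm} {E : PCtx} {u : Tm}, Step t (.ctx E) u →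
    ∃ E₀ s, t = E₀.plug (shift s) ∧ u = reset (substT 0 (contOf (E.comp E₀)) s) := by
  intro t E u h
  generalize hl : Label.ctx E = l at h
  induction h generalizing E with
  | beta => exact absurd hl (by simp)
  | resetVal => exact absurd hl (by simp)
  | appL _ _ => exact absurd hl (by simp)
  | appR _ _ _ => exact absurd hl (by simp)
  | resetT _ _ => exact absurd hl (by simp)
  | resetCap _ _ => exact absurd hl (by simp)
  | lamApp => exact absurd hl (by simp)
  | shiftCap E' =>
      cases hl
      exact ⟨.hole, _, rfl, rfl⟩
  | @capL t0 t0' t1 E' h ih =>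
      cases hl
      obtain ⟨E₀, s, rfl, rfl⟩ := ih rfl
      refine ⟨PCtx.comp (.appL .hole t1) E₀, s, ?_, ?_⟩
      · rw [PCtx.comp_plug]; rfl
      · congr 2
        have h1 : PCtx.appL E' t1 = E'.comp (.appL .hole t1) := by
          simp [PCtx.comp]
        rw [h1, PCtx.comp_assoc]
  | @capR b t t' E' h ih =>
      cases hl
      obtain ⟨E₀, s, rfl, rfl⟩ := ih rfl
      refine ⟨PCtx.comp (.appV b .hole) E₀, s, ?_, ?_⟩
      · rw [PCtx.comp_plug]; rfl
      · congr 2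
        have h1 : PCtx.appV b E' = E'.comp (.appV b .hole) := by
          simp [PCtx.comp]
        rw [h1, PCtx.comp_assoc]

lemma val_step_inv : ∀ {t v u : Tm}, Step t (.val v) u →
    ∃ b, t = lam b ∧ IsValue v ∧ u = substT 0 v b := by
  intro t v u h
  generalize hl : Label.val v = l at h
  cases h <;> first
    | (cases hl; exact ⟨_, rfl, by assumption, rfl⟩)
    | exact absurd hl (by simp)

lemma lam_no_tau {b u : Tm} : ¬ Step (lam b) .tau u := by intro h; cases h
lemma lam_no_ctx {b u : Tm} {E : PCtx} : ¬ Step (lam b) (.ctx E) u := by intro h; cases h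
lemma var_no_step {n : ℕ} {l : Label} {u : Tm} : ¬ Step (var n) l u := by intro h; cases h
lemma shift_no_tau {s u : Tm} : ¬ Step (shift s) .tau u := by intro h; cases h

lemma value_no_tau {t u : Tm} (hv : IsValue t) : ¬ Step t .tau u := by
  obtain ⟨b, rfl⟩ := hv; exact lam_no_tau

lemma value_no_ctx {t u : Tm} {E : PCtx} (hv : IsValue t) : ¬ Step t (.ctx E) u := by
  obtain ⟨b, rfl⟩ := hv; exact lam_no_ctx

lemma app_not_value {a b : Tm} : ¬ IsValue (app a b) := by rintro ⟨c, h⟩; cases h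
lemma shift_not_value {s : Tm} : ¬ IsValue (shift s) := by rintro ⟨c, h⟩; cases h
lemma reset_not_value {s : Tm} : ¬ IsValue (reset s) := by rintro ⟨c, h⟩; cases h
lemma var_not_value {n : ℕ} : ¬ IsValue (var n) := by rintro ⟨c, h⟩; cases h

/-- a non-value with no τ-step stays that way under pure contexts. -/
lemma notau_plug : ∀ (E : PCtx) {r : Tm}, ¬ IsValue r → (∀ u, ¬ Step r .tau u) →
    (∀ u, ¬ Step (E.plug r) .tau u) ∧ ¬ IsValue (E.plug r) := by
  intro E
  induction E with
  | hole => intro r h1 h2; exact ⟨h2, h1⟩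
  | appV b E ih =>
      intro r h1 h2
      refine ih app_not_value (fun u h => ?_)
      cases h with
      | beta hv => exact h1 hv
      | appL h => exact lam_no_tau h
      | appR hv h => exact h2 _ h
  | appL E s ih =>
      intro r h1 h2
      refine ih app_not_value (fun u h => ?_)
      cases h with
      | beta hv => exact h1 ⟨_, rfl⟩
      | appL h => exact h2 _ h
      | appR hv h => exact h1 hv

/-- control-stuck terms have no τ-step and are not values -/
lemma ctlstuck_no_tau (E : PCtx) (s : Tm) :
    (∀ u, ¬ Step (E.plug (shift s)) .tau u) ∧ ¬ IsValue (E.plug (shift s)) :=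
  notau_plug E shift_not_value (fun _ h => shift_no_tau h)

/-- Red implies τ-step. -/
lemma red_step {t u : Tm} (h : Red t u) : Step t .tau u := by
  cases h with
  | beta F t v hv => exact step_tau_plug F (Step.beta hv)
  | cap F E t =>
      apply step_tau_plug F
      apply Step.resetCap
      have := step_ctx_of_decomp E t .hole
      rwa [PCtx.comp_hole_left] at this
  | res F v hv => exact step_tau_plug F (Step.resetVal hv)

/-- τ-step implies Red. -/
lemma step_red : ∀ {t u : Tm}, Step t .tau u → Red t u := by
  intro t u h
  generalize hl : Label.tau = l at h
  induction h with
  | beta hv => exact Red.beta .hole _ _ hv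
  | resetVal hv => exact Red.res .hole _ hv
  | appL h ih => exact red_plug (.appL .hole _) (ih hl)
  | @appR v t t' hv h ih =>
      obtain ⟨b, rfl⟩ := hv
      exact red_plug (.appV b .hole) (ih hl)
  | resetT h ih => exact red_plug (.resetC .hole) (ih hl)
  | resetCap h ih =>
      obtain ⟨E₀, s, rfl, rfl⟩ := ctx_step_inv h
      rw [PCtx.comp_hole_left]
      exact Red.cap .hole _ _
  | lamApp hv => exact absurd hl (by simp)
  | shiftCap E => exact absurd hl (by simp)
  | capL h ih => exact absurd hl (by simp)
  | capR h ih => exact absurd hl (by simp)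

lemma step_tau_iff_red {t u : Tm} : Step t .tau u ↔ Red t u := ⟨step_red, red_step⟩

lemma value_no_red {t u : Tm} (hv : IsValue t) : ¬ Red t u := by
  intro h; exact value_no_tau hv (red_step h)

/-- label-preserving determinism of the LTS. -/
lemma step_det : ∀ {t : Tm} {l : Label} {u u' : Tm}, Step t l u → Step t l u' → u = u' := by
  intro t l u u' h
  induction h generalizing u' with
  | @beta c v hv =>
      intro h'
      cases h' with
      | beta hv' => rfl
      | appL h' => exact absurd h' lam_no_tau
      | appR hv' h' => exact absurd h' (value_no_tau hv)
  | resetVal hv =>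
      intro h'
      cases h' with
      | resetVal hv' => rfl
      | resetT h' => exact absurd h' (value_no_tau hv)
      | resetCap h' => exact absurd h' (value_no_ctx hv)
  | @appL t0 t0' t1 h ih =>
      intro h'
      cases h' with
      | beta hv' => exact absurd h lam_no_tau
      | appL h' => rw [ih h']
      | appR hv' h' => exact absurd h (value_no_tau hv')
  | @appR v t t' hv h ih =>
      intro h'
      cases h' with
      | beta hv' => exact absurd h (value_no_tau hv')
      | appL h' => exact absurd h' (value_no_tau hv)
      | appR hv' h' => rw [ih h']
  | @resetT t t' h ih =>
      intro h'
      cases h' with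
      | resetVal hv' => exact absurd h (value_no_tau hv')
      | resetT h' => rw [ih h']
      | resetCap h' =>
          obtain ⟨E₀, s, rfl, _⟩ := ctx_step_inv h'
          exact absurd h ((ctlstuck_no_tau E₀ s).1 _)
  | @resetCap t t' h ih =>
      intro h'
      cases h' with
      | resetVal hv' => exact absurd h (value_no_ctx hv')
      | resetT h' =>
          obtain ⟨E₀, s, rfl, _⟩ := ctx_step_inv h
          exact absurd h' ((ctlstuck_no_tau E₀ s).1 _)
      | resetCap h' => exact ih h'
  | lamApp hv =>
      intro h'
      cases h'
      rfl
  | shiftCap E =>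
      intro h'
      cases h'
      rfl
  | @capL t0 t0' t1 E h ih =>
      intro h'
      cases h' with
      | capL h' => exact ih h'
      | capR h' => exact absurd h lam_no_ctx
  | @capR b t t' E h ih =>
      intro h'
      cases h' with
      | capL h' => exact absurd h' lam_no_ctx
      | capR h' => exact ih h'

lemma tau_det {t u u' : Tm} (h : Step t .tau u) (h' : Step t .tau u') : u = u' := step_det h h'

lemma red_det {t u u' : Tm} (h : Red t u) (h' : Red t u') : u = u' :=
  tau_det (red_step h) (red_step h')

end LamS
namespace LamS
open Tm

/-! ### Block 2b: evaluation, progress, closedness -/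

lemma redStar_iff_tauStar {t u : Tm} : RedStar t u ↔ TauStar t u := by
  constructor
  · intro h; exact Relation.ReflTransGen.mono (fun _ _ => red_step) _ _ h
  · intro h; exact Relation.ReflTransGen.mono (fun _ _ => step_red) _ _ h

def Irred (t : Tm) : Prop := ∀ u, ¬ Red t u

lemma redStar_irred_eq {a b : Tm} (h : RedStar a b) (ha : Irred a) : a = b := by
  cases h.cases_head with
  | inl h => exact h
  | inr h => obtain ⟨c, hc, _⟩ := h; exact absurd hc (ha c)

lemma redstar_det {t a : Tm} (h : RedStar t a) (ha : Irred a) :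
    ∀ b, RedStar t b → Irred b → b = a := by
  induction h using Relation.ReflTransGen.head_induction_on with
  | refl => intro b hb hirr; exact (redStar_irred_eq hb ha).symm
  | @head t c htc hca ih =>
      intro b hb hirr
      cases hb.cases_head with
      | inl h => subst h; exact absurd htc (hirr c)
      | inr h =>
          obtain ⟨c', hc', hcb⟩ := h
          cases red_det hc' htc
          exact ih b hcb hirr

lemma eval_det {t a b : Tm} (h : Eval t a) (h' : Eval t b) : a = b :=
  redstar_det h'.1 h'.2 a h.1 h.2

lemma eval_red_iff {t u x : Tm} (h : Red t u) : Eval t x ↔ Eval u x := by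
  constructor
  · rintro ⟨hs, hirr⟩
    cases hs.cases_head with
    | inl he => subst he; exact absurd h (hirr u)
    | inr hh => obtain ⟨c, hc, hcx⟩ := hh; rw [red_det h hc]; exact ⟨hcx, hirr⟩
  · rintro ⟨hs, hirr⟩
    exact ⟨Relation.ReflTransGen.head h hs, hirr⟩

lemma evalsToValue_red_iff {t u : Tm} (h : Red t u) : EvalsToValue t ↔ EvalsToValue u := by
  unfold EvalsToValue
  constructor
  · rintro ⟨v, hv, he⟩; exact ⟨v, hv, (eval_red_iff h).1 he⟩
  · rintro ⟨v, hv, he⟩; exact ⟨v, hv, (eval_red_iff h).2 he⟩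

lemma evalsToStuck_red_iff {t u : Tm} (h : Red t u) : EvalsToStuck t ↔ EvalsToStuck u := by
  unfold EvalsToStuck
  constructor
  · rintro ⟨v, hv, he⟩; exact ⟨v, hv, (eval_red_iff h).1 he⟩
  · rintro ⟨v, hv, he⟩; exact ⟨v, hv, (eval_red_iff h).2 he⟩

lemma evalsToValue_redStar_iff {t u : Tm} (h : RedStar t u) :
    EvalsToValue t ↔ EvalsToValue u := by
  induction h with
  | refl => rfl
  | tail _ hstep ih => rw [ih, evalsToValue_red_iff hstep]

lemma evalsToStuck_redStar_iff {t u : Tm} (h : RedStar t u) :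
    EvalsToStuck t ↔ EvalsToStuck u := by
  induction h with
  | refl => rfl
  | tail _ hstep ih => rw [ih, evalsToStuck_red_iff hstep]

lemma value_irred {v : Tm} (hv : IsValue v) : Irred v := fun _ h => value_no_red hv h

lemma eval_value {v : Tm} (hv : IsValue v) : Eval v v :=
  ⟨Relation.ReflTransGen.refl, value_irred hv⟩

lemma evalsToValue_of_value {v : Tm} (hv : IsValue v) : EvalsToValue v :=
  ⟨v, hv, eval_value hv⟩

lemma ctlstuck_irred (E : PCtx) (s : Tm) : Irred (E.plug (shift s)) :=
  fun u h => (ctlstuck_no_tau E s).1 u (red_step h)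

lemma ctlstuck_stuck (E : PCtx) (s : Tm) : Stuck (E.plug (shift s)) :=
  ⟨(ctlstuck_no_tau E s).2, ctlstuck_irred E s⟩

/-- progress / classification -/
lemma decomp : ∀ (t : Tm), IsValue t ∨ (∃ u, Red t u) ∨ (∃ E s, t = PCtx.plug E (shift s)) ∨
    (∃ F n, t = ECtx.plug F (var n)) := by
  intro t
  induction t with
  | var n => exact .inr (.inr (.inr ⟨.hole, n, rfl⟩))
  | lam b => exact .inl ⟨b, rfl⟩
  | app a b iha ihb =>
      rcases iha with hv | ⟨u, hr⟩ | ⟨E, s, rfl⟩ | ⟨F, n, rfl⟩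
      · obtain ⟨a', rfl⟩ := hv
        rcases ihb with hv' | ⟨u, hr⟩ | ⟨E, s, rfl⟩ | ⟨F, n, rfl⟩
        · exact .inr (.inl ⟨_, Red.beta .hole a' b hv'⟩)
        · exact .inr (.inl ⟨_, red_plug (.appV a' .hole) hr⟩)
        · refine .inr (.inr (.inl ⟨PCtx.comp (.appV a' .hole) E, s, ?_⟩))
          rw [PCtx.comp_plug]; rfl
        · refine .inr (.inr (.inr ⟨ECtx.comp (.appV a' .hole) F, n, ?_⟩))
          rw [ECtx.comp_plug]; rfl
      · exact .inr (.inl ⟨_, red_plug (.appL .hole b) hr⟩)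
      · refine .inr (.inr (.inl ⟨PCtx.comp (.appL .hole b) E, s, ?_⟩))
        rw [PCtx.comp_plug]; rfl
      · refine .inr (.inr (.inr ⟨ECtx.comp (.appL .hole b) F, n, ?_⟩))
        rw [ECtx.comp_plug]; rfl
  | shift s ih => exact .inr (.inr (.inl ⟨.hole, s, rfl⟩))
  | reset t ih =>
      rcases ih with hv | ⟨u, hr⟩ | ⟨E, s, rfl⟩ | ⟨F, n, rfl⟩
      · exact .inr (.inl ⟨_, Red.res .hole t hv⟩)
      · exact .inr (.inl ⟨_, red_plug (.resetC .hole) hr⟩)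
      · exact .inr (.inl ⟨_, Red.cap .hole E s⟩)
      · refine .inr (.inr (.inr ⟨ECtx.comp (.resetC .hole) F, n, ?_⟩))
        rw [ECtx.comp_plug]; rfl

/-- closedness through evaluation contexts -/
lemma closed_eplug : ∀ (F : ECtx) (a : Tm), Closed (F.plug a) →
    Closed a ∧ ∀ b, Closed b → Closed (F.plug b) := by
  intro F
  induction F with
  | hole => intro a h; exact ⟨h, fun b hb => hb⟩
  | appV c F ih =>
      intro a h
      obtain ⟨h1, h2⟩ := ih _ h
      exact ⟨h1.2, fun b hb => h2 _ ⟨h1.1, hb⟩⟩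
  | appL F s ih =>
      intro a h
      obtain ⟨h1, h2⟩ := ih _ h
      exact ⟨h1.1, fun b hb => h2 _ ⟨hb, h1.2⟩⟩
  | resetC F ih =>
      intro a h
      obtain ⟨h1, h2⟩ := ih _ h
      exact ⟨h1, fun b hb => h2 _ hb⟩

/-- structural closedness of pure contexts -/
def PCU : ℕ → PCtx → Prop
  | _, .hole => True
  | k, .appV b E => ClosedUnder (k+1) b ∧ PCU k E
  | k, .appL E s => PCU k E ∧ ClosedUnder k s

lemma cu_pplug_iff : ∀ (E : PCtx) (a : Tm) (k : ℕ),
    ClosedUnder k (E.plug a) ↔ PCU k E ∧ ClosedUnder k a := by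
  intro E
  induction E with
  | hole => intro a k; simp [PCtx.plug, PCU]
  | appV b E ih =>
      intro a k
      show ClosedUnder k (E.plug (app (lam b) a)) ↔ _
      rw [ih]
      show PCU k E ∧ (ClosedUnder (k+1) b ∧ ClosedUnder k a) ↔
        ((ClosedUnder (k+1) b ∧ PCU k E) ∧ ClosedUnder k a)
      tauto
  | appL E s ih =>
      intro a k
      show ClosedUnder k (E.plug (app a s)) ↔ _
      rw [ih]
      show PCU k E ∧ (ClosedUnder k a ∧ ClosedUnder k s) ↔
        ((PCU k E ∧ ClosedUnder k s) ∧ ClosedUnder k a)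
      tauto

lemma pcu_liftC : ∀ (E : PCtx) {k c : ℕ} (d : ℕ), c ≤ k → PCU k E →
    PCU (k+d) (PCtx.liftC d c E) := by
  intro E
  induction E with
  | hole => intro k c d h hp; trivial
  | appV b E ih =>
      intro k c d h hp
      refine ⟨?_, ih d h hp.2⟩
      have := closedUnder_liftT b (n := k+1) (c := c+1) d (by omega) hp.1
      simpa [Nat.add_right_comm] using this
  | appL E s ih =>
      intro k c d h hp
      exact ⟨ih d h hp.1, closedUnder_liftT s d h hp.2⟩

lemma contOf_closed {E : PCtx} (h : PCU 0 E) : Closed (contOf E) := by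
  show ClosedUnder 1 (reset _)
  show ClosedUnder 1 ((PCtx.liftC 1 0 E).plug (var 0))
  rw [cu_pplug_iff]
  refine ⟨?_, by simp [ClosedUnder]⟩
  have := pcu_liftC E (k := 0) (c := 0) 1 (by omega) h
  simpa using this

lemma red_closed {t u : Tm} (h : Red t u) (hc : Closed t) : Closed u := by
  cases h with
  | beta F b v hv =>
      obtain ⟨h1, h2⟩ := closed_eplug F _ hc
      refine h2 _ ?_
      exact closedUnder_substT b h1.1 h1.2
  | cap F E s =>
      obtain ⟨h1, h2⟩ := closed_eplug F _ hc
      have h3 : PCU 0 E ∧ ClosedUnder 0 (shift s) := by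
        rw [← cu_pplug_iff]; exact h1
      refine h2 _ ?_
      show ClosedUnder 0 (substT 0 (contOf E) s)
      exact closedUnder_substT s h3.2 (contOf_closed h3.1)
  | res F v hv =>
      obtain ⟨h1, h2⟩ := closed_eplug F _ hc
      exact h2 _ h1

lemma redStar_closed {t u : Tm} (h : RedStar t u) (hc : Closed t) : Closed u := by
  induction h with
  | refl => exact hc
  | tail _ hstep ih => exact red_closed hstep ih

lemma closed_stuck_decomp {t : Tm} (hc : Closed t) (hs : Stuck t) :
    ∃ E s, t = PCtx.plug E (shift s) := by
  rcases decomp t with hv | ⟨u, hr⟩ | ⟨E, s, rfl⟩ | ⟨F, n, rfl⟩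
  · exact absurd hv hs.1
  · exact absurd hr (hs.2 u)
  · exact ⟨E, s, rfl⟩
  · exfalso
    have := (closed_eplug F _ hc).1
    simp [Closed, ClosedUnder] at this

lemma closed_irred_cases {t : Tm} (hc : Closed t) (hi : Irred t) :
    IsValue t ∨ ∃ E s, t = PCtx.plug E (shift s) := by
  by_cases hv : IsValue t
  · exact .inl hv
  · exact .inr (closed_stuck_decomp hc ⟨hv, hi⟩)

lemma tauStar_closed {t u : Tm} (h : TauStar t u) (hc : Closed t) : Closed u :=
  redStar_closed (redStar_iff_tauStar.2 h) hc

end LamS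
namespace LamS
open Tm

/-! ### Block 3: bisimilarity toolkit -/

lemma weak_of_step {t t' : Tm} {l : Label} (h : Step t l t') : Weak t l t' := by
  cases l with
  | tau => exact Relation.ReflTransGen.single h
  | val v => exact ⟨t, Relation.ReflTransGen.refl, h⟩
  | ctx E => exact ⟨t, Relation.ReflTransGen.refl, h⟩

lemma weak_refl_tau (t : Tm) : Weak t .tau t := Relation.ReflTransGen.refl

lemma weak_tau_left {t u t' : Tm} {l : Label} (h : TauStar t u) (h' : Weak u l t') :
    Weak t l t' := by
  cases l with
  | tau => exact Relation.ReflTransGen.trans h h'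
  | val v => obtain ⟨w, hw, hs⟩ := h'; exact ⟨w, Relation.ReflTransGen.trans h hw, hs⟩
  | ctx E => obtain ⟨w, hw, hs⟩ := h'; exact ⟨w, Relation.ReflTransGen.trans h hw, hs⟩

lemma isSim_tauStar {R : Tm → Tm → Prop} (hR : IsSim R) {t0 t1 u : Tm}
    (h : R t0 t1) (hs : TauStar t0 u) : ∃ u1, TauStar t1 u1 ∧ R u u1 := by
  induction hs with
  | refl => exact ⟨t1, Relation.ReflTransGen.refl, h⟩
  | tail _ hstep ih =>
      obtain ⟨u1, hu1, hr⟩ := ih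
      obtain ⟨u2, hu2, hr2⟩ := hR hr hstep
      exact ⟨u2, Relation.ReflTransGen.trans hu1 hu2, hr2⟩

lemma isSim_weak {R : Tm → Tm → Prop} (hR : IsSim R) {t0 t1 t0' : Tm} {l : Label}
    (h : R t0 t1) (hs : Weak t0 l t0') : ∃ t1', Weak t1 l t1' ∧ R t0' t1' := by
  cases l with
  | tau => exact isSim_tauStar hR h hs
  | val v =>
      obtain ⟨u, hu, hstep⟩ := hs
      obtain ⟨u1, hu1, hr⟩ := isSim_tauStar hR h hu
      obtain ⟨t1', h1', hr'⟩ := hR hr hstep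
      exact ⟨t1', weak_tau_left hu1 h1', hr'⟩
  | ctx E =>
      obtain ⟨u, hu, hstep⟩ := hs
      obtain ⟨u1, hu1, hr⟩ := isSim_tauStar hR h hu
      obtain ⟨t1', h1', hr'⟩ := hR hr hstep
      exact ⟨t1', weak_tau_left hu1 h1', hr'⟩

lemma bisim_step {t0 t1 t0' : Tm} {l : Label} (h : Bisim t0 t1) (hs : Step t0 l t0') :
    ∃ t1', Weak t1 l t1' ∧ Bisim t0' t1' := by
  obtain ⟨R, hR, hr⟩ := h
  obtain ⟨t1', h1, h2⟩ := hR.1 hr hs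
  exact ⟨t1', h1, R, hR, h2⟩

lemma bisim_step_rev {t0 t1 t1' : Tm} {l : Label} (h : Bisim t0 t1) (hs : Step t1 l t1') :
    ∃ t0', Weak t0 l t0' ∧ Bisim t0' t1' := by
  obtain ⟨R, hR, hr⟩ := h
  obtain ⟨t0', h1, h2⟩ := hR.2 (show flip R t1 t0 from hr) hs
  exact ⟨t0', h1, R, hR, h2⟩

lemma bisim_isSim : IsSim Bisim := fun _ _ h _ _ hs => bisim_step h hs

lemma bisim_weak {t0 t1 t0' : Tm} {l : Label} (h : Bisim t0 t1) (hs : Weak t0 l t0') :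
    ∃ t1', Weak t1 l t1' ∧ Bisim t0' t1' :=
  isSim_weak bisim_isSim h hs

lemma bisim_refl (t : Tm) : Bisim t t := by
  refine ⟨Eq, ⟨?_, ?_⟩, rfl⟩
  · intro a b hab l a' hs; cases hab; exact ⟨a', weak_of_step hs, rfl⟩
  · intro a b hab l a' hs; cases hab; exact ⟨a', weak_of_step hs, rfl⟩

lemma bisim_symm {t0 t1 : Tm} (h : Bisim t0 t1) : Bisim t1 t0 := by
  obtain ⟨R, hR, hr⟩ := h
  exact ⟨flip R, ⟨hR.2, hR.1⟩, hr⟩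

lemma bisim_weak_rev {t0 t1 t1' : Tm} {l : Label} (h : Bisim t0 t1) (hs : Weak t1 l t1') :
    ∃ t0', Weak t0 l t0' ∧ Bisim t0' t1' := by
  obtain ⟨t0', h1, h2⟩ := bisim_weak (bisim_symm h) hs
  exact ⟨t0', h1, bisim_symm h2⟩

lemma isBisim_of_symm {R : Tm → Tm → Prop} (hsym : ∀ a b, R a b → R b a) (hsim : IsSim R) :
    IsBisim R :=
  ⟨hsim, fun a b hab l a' hs => by
    obtain ⟨t1', hw, hr⟩ := hsim (hsym b a hab) hs
    exact ⟨t1', hw, hsym _ _ hr⟩⟩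

lemma bisim_trans {t0 t1 t2 : Tm} (h1 : Bisim t0 t1) (h2 : Bisim t1 t2) : Bisim t0 t2 := by
  refine ⟨fun a c => ∃ b, Bisim a b ∧ Bisim b c, ?_, t1, h1, h2⟩
  constructor
  · rintro a c ⟨b, hab, hbc⟩ l a' hs
    obtain ⟨b', hwb, hab'⟩ := bisim_step hab hs
    obtain ⟨c', hwc, hbc'⟩ := bisim_weak hbc hwb
    exact ⟨c', hwc, b', hab', hbc'⟩
  · rintro c a ⟨b, hab, hbc⟩ l c' hs
    obtain ⟨b', hwb, hbc'⟩ := bisim_step_rev hbc hs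
    obtain ⟨a', hwa, hab'⟩ := bisim_weak_rev hab hwb
    exact ⟨a', hwa, b', hab', hbc'⟩

/-- a τ-step (i.e. a reduction step) is a bisimilarity. -/
lemma bisim_red {t t' : Tm} (h : Red t t') : Bisim t t' := by
  refine ⟨fun a b => a = b ∨ (a = t ∧ b = t') ∨ (a = t' ∧ b = t), ?_, .inr (.inl ⟨rfl, rfl⟩)⟩
  have hτ : Step t .tau t' := red_step h
  apply isBisim_of_symm
  · rintro a b (rfl | ⟨rfl, rfl⟩ | ⟨rfl, rfl⟩)
    · exact .inl rfl
    · exact .inr (.inr ⟨rfl, rfl⟩)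
    · exact .inr (.inl ⟨rfl, rfl⟩)
  · rintro a b (rfl | ⟨rfl, rfl⟩ | ⟨rfl, rfl⟩) l a' hs
    · exact ⟨a', weak_of_step hs, .inl rfl⟩
    · -- a = t, b = t'
      cases l with
      | tau =>
          exact ⟨b, weak_refl_tau b, .inl (tau_det hs hτ)⟩
      | val v =>
          obtain ⟨c, rfl, _, _⟩ := val_step_inv hs
          exact absurd h (value_no_red ⟨c, rfl⟩)
      | ctx E =>
          obtain ⟨E₀, s, rfl, _⟩ := ctx_step_inv hs
          exact absurd h (ctlstuck_irred E₀ s _)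
    · -- a = t', b = t
      exact ⟨a', weak_tau_left (Relation.ReflTransGen.single hτ) (weak_of_step hs), .inl rfl⟩

lemma bisim_redStar {t t' : Tm} (h : RedStar t t') : Bisim t t' := by
  induction h with
  | refl => exact bisim_refl _
  | tail _ hstep ih => exact bisim_trans ih (bisim_red hstep)

lemma bisim_tauStar {t t' : Tm} (h : TauStar t t') : Bisim t t' :=
  bisim_redStar (redStar_iff_tauStar.2 h)

end LamS
namespace LamS
open Tm

/-! ### Block 4: erasure bisimulation -/

lemma OmegaTm_eq : OmegaTm = app (lam (app (var 0) (var 0))) (lam (app (var 0) (var 0))) := rfl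

lemma omega_closed : Closed OmegaTm := by
  show ClosedUnder 0 _
  rw [OmegaTm_eq]
  show ((0 < 1 ∧ 0 < 1)) ∧ ((0 < 1 ∧ 0 < 1))
  omega

lemma subst_omega (j : ℕ) (s : Tm) : substT j s OmegaTm = OmegaTm := by
  exact substT_closed _ _ (closedUnder_mono _ (by omega) omega_closed)

lemma lift_omega (d c : ℕ) : liftT d c OmegaTm = OmegaTm :=
  liftT_closed _ _ (closedUnder_mono _ (by omega) omega_closed)

lemma subst_omega_body : substT 0 omegaTm (app (var 0) (var 0)) = OmegaTm := by
  show app _ _ = _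
  rw [OmegaTm_eq]
  simp [substT, liftT_zero]
  rfl

/-- occurrence-wise erasure of free variables (≥ k) to Ω. -/
inductive Er : ℕ → Tm → Tm → Prop
  | var (k n : ℕ) : Er k (var n) (var n)
  | varOmega {k n : ℕ} (h : k ≤ n) :
      Er k (var n) (app (lam (app (var 0) (var 0))) (lam (app (var 0) (var 0))))
  | lam {k a b} : Er (k+1) a b → Er k (lam a) (lam b)
  | app {k a a' b b'} : Er k a a' → Er k b b' → Er k (app a b) (app a' b')
  | shift {k a b} : Er (k+1) a b → Er k (shift a) (shift b)
  | reset {k a b} : Er k a b → Er k (reset a) (reset b)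

inductive ErP : ℕ → PCtx → PCtx → Prop
  | hole (k : ℕ) : ErP k .hole .hole
  | appV {k b b' E E'} : Er (k+1) b b' → ErP k E E' → ErP k (.appV b E) (.appV b' E')
  | appL {k E E' s s'} : ErP k E E' → Er k s s' → ErP k (.appL E s) (.appL E' s')

lemma er_varOmega' {k n : ℕ} (h : k ≤ n) : Er k (var n) OmegaTm := by
  rw [OmegaTm_eq]; exact Er.varOmega h

lemma er_refl : ∀ (t : Tm) (k : ℕ), Er k t t := by
  intro t
  induction t with
  | var n => intro k; exact Er.var k n
  | lam t ih => intro k; exact Er.lam (ih (k+1))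
  | app a b iha ihb => intro k; exact Er.app (iha k) (ihb k)
  | shift t ih => intro k; exact Er.shift (ih (k+1))
  | reset t ih => intro k; exact Er.reset (ih k)

lemma erp_refl : ∀ (E : PCtx) (k : ℕ), ErP k E E := by
  intro E
  induction E with
  | hole => intro k; exact ErP.hole k
  | appV b E ih => intro k; exact ErP.appV (er_refl b (k+1)) (ih k)
  | appL E s ih => intro k; exact ErP.appL (ih k) (er_refl s k)

lemma er_liftT : ∀ {k a b}, Er k a b → ∀ {c} (d : ℕ), c ≤ k →
    Er (k+d) (liftT d c a) (liftT d c b) := by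
  intro k a b h
  induction h with
  | var k n =>
      intro c d hc
      show Er _ (if n < c then _ else _) (if n < c then _ else _)
      split <;> exact Er.var _ _
  | @varOmega k n hn =>
      intro c d hc
      show Er _ (if n < c then _ else _) _
      rw [if_neg (by omega)]
      rw [show liftT d c (app (lam (app (var 0) (var 0))) (lam (app (var 0) (var 0)))) = OmegaTm
          from by rw [← OmegaTm_eq]; exact lift_omega d c, OmegaTm_eq]
      exact Er.varOmega (by omega)
  | @lam k a b h ih =>
      intro c d hc
      refine Er.lam ?_
      have := ih (c := c+1) d (by omega)
      rwa [Nat.add_right_comm] at this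
  | app h1 h2 ih1 ih2 => intro c d hc; exact Er.app (ih1 d hc) (ih2 d hc)
  | @shift k a b h ih =>
      intro c d hc
      refine Er.shift ?_
      have := ih (c := c+1) d (by omega)
      rwa [Nat.add_right_comm] at this
  | reset h ih => intro c d hc; exact Er.reset (ih d hc)

lemma er_substT : ∀ {K' a b}, Er K' a b → ∀ {j K v v'}, K' = j + K + 1 → Er K v v' →
    Er (j + K) (substT j v a) (substT j v' b) := by
  intro K' a b h
  induction h with
  | var k n =>
      intro j K v v' hk hv
      show Er _ (if n = j then _ else _) (if n = j then _ else _)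
      by_cases hn : n = j
      · rw [if_pos hn, if_pos hn]
        have := er_liftT hv (c := 0) j (by omega)
        rwa [Nat.add_comm K j] at this
      · rw [if_neg hn, if_neg hn]
        split <;> exact Er.var _ _
  | @varOmega k n hn =>
      intro j K v v' hk hv
      show Er _ (if n = j then _ else _) _
      rw [if_neg (by omega), if_pos (by omega : j < n)]
      rw [show substT j v' (app (lam (app (var 0) (var 0))) (lam (app (var 0) (var 0)))) = OmegaTm
          from by rw [← OmegaTm_eq]; exact subst_omega j v', OmegaTm_eq]
      exact Er.varOmega (by omega)
  | @lam k a b h ih =>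
      intro j K v v' hk hv
      exact Er.lam (by
        have := ih (j := j+1) (K := K) (by omega) hv
        rwa [Nat.add_right_comm] at this)
  | app h1 h2 ih1 ih2 =>
      intro j K v v' hk hv
      exact Er.app (ih1 hk hv) (ih2 hk hv)
  | @shift k a b h ih =>
      intro j K v v' hk hv
      exact Er.shift (by
        have := ih (j := j+1) (K := K) (by omega) hv
        rwa [Nat.add_right_comm] at this)
  | reset h ih =>
      intro j K v v' hk hv
      exact Er.reset (ih hk hv)

lemma er_subst0 {a b v v' : Tm} (h : Er 1 a b) (hv : Er 0 v v') :
    Er 0 (substT 0 v a) (substT 0 v' b) :=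
  er_substT h (by omega) hv

lemma erp_liftC : ∀ {k E E'}, ErP k E E' → ∀ {c} (d : ℕ), c ≤ k →
    ErP (k+d) (PCtx.liftC d c E) (PCtx.liftC d c E') := by
  intro k E E' h
  induction h with
  | hole => intro c d hc; exact ErP.hole _
  | appV hb hE ih =>
      intro c d hc
      refine ErP.appV ?_ (ih d hc)
      have := er_liftT hb (c := c+1) d (by omega)
      rwa [Nat.add_right_comm] at this
  | appL hE hs ih => intro c d hc; exact ErP.appL (ih d hc) (er_liftT hs d hc)

lemma er_plug : ∀ {k E E'}, ErP k E E' → ∀ {r r'}, Er k r r' →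
    Er k (E.plug r) (E'.plug r') := by
  intro k E E' h
  induction h with
  | hole => intro r r' hr; exact hr
  | appV hb hE ih => intro r r' hr; exact ih (Er.app (Er.lam hb) hr)
  | appL hE hs ih => intro r r' hr; exact ih (Er.app hr hs)

lemma er_contOf {E E' : PCtx} (h : ErP 0 E E') : Er 0 (contOf E) (contOf E') := by
  apply Er.lam
  apply Er.reset
  exact er_plug (erp_liftC h 1 (by omega)) (Er.var 1 0)

lemma erp_comp : ∀ {k E E' F F'}, ErP k E E' → ErP k F F' →
    ErP k (E.comp F) (E'.comp F') := by
  intro k E E' F F' hE hF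
  induction hF with
  | hole => exact hE
  | appV hb h ih => exact ErP.appV hb ih
  | appL h hs ih => exact ErP.appL ih hs

def ErLbl : Label → Label → Prop
  | .tau, .tau => True
  | .val v, .val v' => Er 0 v v'
  | .ctx E, .ctx E' => ErP 0 E E'
  | _, _ => False

lemma erLbl_refl : ∀ l, ErLbl l l := by
  intro l; cases l with
  | tau => trivial
  | val v => exact er_refl v 0
  | ctx E => exact erp_refl E 0

end LamS
namespace LamS
open Tm

/-! ### Block 4b: erasure game lemmas -/

lemma erLbl_tau_inv_right {l : Label} (h : ErLbl l .tau) : l = .tau := by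
  cases l <;> simp [ErLbl] at h ⊢

lemma erLbl_val_inv_right {l : Label} {v' : Tm} (h : ErLbl l (.val v')) :
    ∃ v, l = .val v ∧ Er 0 v v' := by
  cases l with
  | tau => exact absurd h (by simp [ErLbl])
  | val v => exact ⟨v, rfl, h⟩
  | ctx E => exact absurd h (by simp [ErLbl])

lemma erLbl_ctx_inv_right {l : Label} {E' : PCtx} (h : ErLbl l (.ctx E')) :
    ∃ E, l = .ctx E ∧ ErP 0 E E' := by
  cases l with
  | tau => exact absurd h (by simp [ErLbl])
  | val v => exact absurd h (by simp [ErLbl])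
  | ctx E => exact ⟨E, rfl, h⟩

lemma erLbl_tau_inv {l' : Label} (h : ErLbl .tau l') : l' = .tau := by
  cases l' <;> simp [ErLbl] at h ⊢

lemma erLbl_val_inv {l' : Label} {v : Tm} (h : ErLbl (.val v) l') :
    ∃ v', l' = .val v' ∧ Er 0 v v' := by
  cases l' with
  | tau => exact absurd h (by simp [ErLbl])
  | val v' => exact ⟨v', rfl, h⟩
  | ctx E => exact absurd h (by simp [ErLbl])

lemma erLbl_ctx_inv {l' : Label} {E : PCtx} (h : ErLbl (.ctx E) l') :
    ∃ E', l' = .ctx E' ∧ ErP 0 E E' := by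
  cases l' with
  | tau => exact absurd h (by simp [ErLbl])
  | val v' => exact absurd h (by simp [ErLbl])
  | ctx E' => exact ⟨E', rfl, h⟩

lemma er_step : ∀ {a : Tm} {l : Label} {a' : Tm}, Step a l a' →
    ∀ {b : Tm} {l' : Label}, Er 0 a b → ErLbl l l' →
    ∃ b', Step b l' b' ∧ Er 0 a' b' := by
  intro a l a' h
  induction h with
  | @beta c v hv =>
      intro b l' hE hl
      cases erLbl_tau_inv hl
      obtain ⟨w, rfl⟩ := hv
      cases hE with
      | app h1 h2 =>
          cases h1 with
          | lam hc =>
              cases h2 with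
              | lam hw =>
                  exact ⟨_, Step.beta ⟨_, rfl⟩, er_subst0 hc (Er.lam hw)⟩
  | @resetVal v hv =>
      intro b l' hE hl
      cases erLbl_tau_inv hl
      obtain ⟨w, rfl⟩ := hv
      cases hE with
      | reset h1 =>
          cases h1 with
          | lam hw => exact ⟨_, Step.resetVal ⟨_, rfl⟩, Er.lam hw⟩
  | appL h ih =>
      intro b l' hE hl
      cases erLbl_tau_inv hl
      cases hE with
      | app h1 h2 =>
          obtain ⟨B0', s, e⟩ := ih h1 (show ErLbl Label.tau Label.tau from trivial)
          exact ⟨_, Step.appL s, Er.app e h2⟩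
  | @appR v t t' hv h ih =>
      intro b l' hE hl
      cases erLbl_tau_inv hl
      obtain ⟨w, rfl⟩ := hv
      cases hE with
      | app h1 h2 =>
          obtain ⟨B1', s, e⟩ := ih h2 (show ErLbl Label.tau Label.tau from trivial)
          cases h1 with
          | lam hw => exact ⟨_, Step.appR ⟨_, rfl⟩ s, Er.app (Er.lam hw) e⟩
  | resetT h ih =>
      intro b l' hE hl
      cases erLbl_tau_inv hl
      cases hE with
      | reset h1 =>
          obtain ⟨B', s, e⟩ := ih h1 (show ErLbl Label.tau Label.tau from trivial)
          exact ⟨_, Step.resetT s, Er.reset e⟩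
  | resetCap h ih =>
      intro b l' hE hl
      cases erLbl_tau_inv hl
      cases hE with
      | reset h1 =>
          obtain ⟨B', s, e⟩ := ih h1 (show ErLbl (.ctx .hole) (.ctx .hole) from ErP.hole 0)
          exact ⟨_, Step.resetCap s, e⟩
  | @lamApp c v hv =>
      intro b l' hE hl
      obtain ⟨v', rfl, hvv⟩ := erLbl_val_inv hl
      obtain ⟨w, rfl⟩ := hv
      cases hE with
      | lam hc =>
          cases hvv with
          | lam hw => exact ⟨_, Step.lamApp ⟨_, rfl⟩, er_subst0 hc (Er.lam hw)⟩
  | @shiftCap s E =>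
      intro b l' hE hl
      obtain ⟨E', rfl, hEE⟩ := erLbl_ctx_inv hl
      cases hE with
      | shift hs =>
          exact ⟨_, Step.shiftCap E', Er.reset (er_subst0 hs (er_contOf hEE))⟩
  | @capL t0 t0' t1 E h ih =>
      intro b l' hE hl
      obtain ⟨E₂, rfl, hEE⟩ := erLbl_ctx_inv hl
      cases hE with
      | app h1 h2 =>
          obtain ⟨b', s, e⟩ := ih h1 (show ErLbl (.ctx (.appL E t1)) (.ctx (.appL E₂ _))
            from ErP.appL hEE h2)
          exact ⟨b', Step.capL s, e⟩
  | @capR c t t' E h ih =>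
      intro b l' hE hl
      obtain ⟨E₂, rfl, hEE⟩ := erLbl_ctx_inv hl
      cases hE with
      | app h1 h2 =>
          cases h1 with
          | lam hc =>
              obtain ⟨b', s, e⟩ := ih h2 (show ErLbl (.ctx (.appV c E)) (.ctx (.appV _ E₂))
                from ErP.appV hc hEE)
              exact ⟨b', Step.capR s, e⟩

lemma er_step_rev : ∀ {b : Tm} {l' : Label} {b' : Tm}, Step b l' b' →
    ∀ {a : Tm} {l : Label}, Er 0 a b → ErLbl l l' →
    (l' = Label.tau ∧ Er 0 a b') ∨ (∃ a', Step a l a' ∧ Er 0 a' b') := by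
  intro b l' b' h
  induction h with
  | @beta c' v' hv' =>
      intro a l hE hl
      cases erLbl_tau_inv_right hl
      obtain ⟨w', hw'⟩ := hv'
      cases hE with
      | app h1 h2 =>
          cases h1 with
          | lam hc =>
              subst hw'
              cases h2 with
              | lam hw => exact .inr ⟨_, Step.beta ⟨_, rfl⟩, er_subst0 hc (Er.lam hw)⟩
      | varOmega hn =>
          refine .inl ⟨rfl, ?_⟩
          rw [show substT 0 (lam (app (var 0) (var 0))) (app (var 0) (var 0)) = OmegaTm
            from subst_omega_body]
          exact er_varOmega' hn
  | @resetVal v' hv' =>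
      intro a l hE hl
      cases erLbl_tau_inv_right hl
      obtain ⟨w', rfl⟩ := hv'
      cases hE with
      | reset h1 =>
          cases h1 with
          | lam hw => exact .inr ⟨_, Step.resetVal ⟨_, rfl⟩, Er.lam hw⟩
  | appL h ih =>
      intro a l hE hl
      cases erLbl_tau_inv_right hl
      cases hE with
      | app h1 h2 =>
          rcases ih h1 (show ErLbl Label.tau Label.tau from trivial) with ⟨_, e⟩ | ⟨A0', s, e⟩
          · exact .inl ⟨rfl, Er.app e h2⟩
          · exact .inr ⟨_, Step.appL s, Er.app e h2⟩
      | varOmega hn => exact absurd h lam_no_tau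
  | @appR v' t t' hv' h ih =>
      intro a l hE hl
      cases erLbl_tau_inv_right hl
      obtain ⟨w', rfl⟩ := hv'
      cases hE with
      | app h1 h2 =>
          rcases ih h2 (show ErLbl Label.tau Label.tau from trivial) with ⟨_, e⟩ | ⟨A1', s, e⟩
          · exact .inl ⟨rfl, Er.app h1 e⟩
          · cases h1 with
            | lam hw => exact .inr ⟨_, Step.appR ⟨_, rfl⟩ s, Er.app (Er.lam hw) e⟩
      | varOmega hn => exact absurd h lam_no_tau
  | resetT h ih =>
      intro a l hE hl
      cases erLbl_tau_inv_right hl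
      cases hE with
      | reset h1 =>
          rcases ih h1 (show ErLbl Label.tau Label.tau from trivial) with ⟨_, e⟩ | ⟨A', s, e⟩
          · exact .inl ⟨rfl, Er.reset e⟩
          · exact .inr ⟨_, Step.resetT s, Er.reset e⟩
  | resetCap h ih =>
      intro a l hE hl
      cases erLbl_tau_inv_right hl
      cases hE with
      | reset h1 =>
          rcases ih h1 (show ErLbl (.ctx .hole) (.ctx .hole) from ErP.hole 0) with ⟨he, _⟩ | ⟨A', s, e⟩
          · exact absurd he (by simp)
          · exact .inr ⟨_, Step.resetCap s, e⟩
  | @lamApp c' v' hv' =>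
      intro a l hE hl
      obtain ⟨v, rfl, hvv⟩ := erLbl_val_inv_right hl
      obtain ⟨w', rfl⟩ := hv'
      cases hE with
      | lam hc =>
          cases hvv with
          | lam hw => exact .inr ⟨_, Step.lamApp ⟨_, rfl⟩, er_subst0 hc (Er.lam hw)⟩
  | @shiftCap s' E' =>
      intro a l hE hl
      obtain ⟨E, rfl, hEE⟩ := erLbl_ctx_inv_right hl
      cases hE with
      | shift hs =>
          exact .inr ⟨_, Step.shiftCap E, Er.reset (er_subst0 hs (er_contOf hEE))⟩
  | @capL B0 b' B1 E' h ih =>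
      intro a l hE hl
      obtain ⟨E, rfl, hEE⟩ := erLbl_ctx_inv_right hl
      cases hE with
      | app h1 h2 =>
          rcases ih h1 (show ErLbl (.ctx (.appL E _)) (.ctx (.appL E' B1))
              from ErP.appL hEE h2) with ⟨he, _⟩ | ⟨A', s, e⟩
          · exact absurd he (by simp)
          · exact .inr ⟨_, Step.capL s, e⟩
      | varOmega hn => exact absurd h lam_no_ctx
  | @capR c' t t' E' h ih =>
      intro a l hE hl
      obtain ⟨E, rfl, hEE⟩ := erLbl_ctx_inv_right hl
      cases hE with
      | app h1 h2 =>
          cases h1 with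
          | lam hc =>
              rcases ih h2 (show ErLbl (.ctx (.appV _ E)) (.ctx (.appV c' E'))
                  from ErP.appV hc hEE) with ⟨he, _⟩ | ⟨A', s, e⟩
              · exact absurd he (by simp)
              · exact .inr ⟨_, Step.capR s, e⟩
      | varOmega hn => exact absurd h lam_no_ctx

lemma er_bisim {a b : Tm} (h : Er 0 a b) : Bisim a b := by
  refine ⟨fun x y => Er 0 x y, ⟨?_, ?_⟩, h⟩
  · intro x y hxy l x' hs
    obtain ⟨b', s, e⟩ := er_step hs hxy (erLbl_refl l)
    exact ⟨b', weak_of_step s, e⟩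
  · intro y x hxy l y' hs
    rcases er_step_rev hs hxy (erLbl_refl l) with ⟨rfl, e⟩ | ⟨x', s, e⟩
    · exact ⟨x, weak_refl_tau x, e⟩
    · exact ⟨x', weak_of_step s, e⟩

/-! erasure as a substitution -/

def eraseA (t : Tm) : Tm := applySub (fun _ => OmegaTm) t

lemma er_applySub_omega : ∀ (t : Tm) {k : ℕ} {σ : ℕ → Tm},
    (∀ n, n < k → σ n = var n) → (∀ n, k ≤ n → σ n = OmegaTm) →
    Er k t (applySub σ t) := by
  intro t
  induction t with
  | var n =>
      intro k σ h1 h2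
      show Er k (var n) (σ n)
      by_cases h : n < k
      · rw [h1 n h]; exact Er.var k n
      · rw [h2 n (by omega)]; exact er_varOmega' (by omega)
  | lam t ih =>
      intro k σ h1 h2
      refine Er.lam (ih ?_ ?_)
      · intro n hn
        cases n with
        | zero => rfl
        | succ n => show liftT 1 0 (σ n) = _; rw [h1 n (by omega)]; rfl
      · intro n hn
        cases n with
        | zero => omega
        | succ n => show liftT 1 0 (σ n) = _; rw [h2 n (by omega)]; exact lift_omega 1 0
  | app a b iha ihb =>
      intro k σ h1 h2
      exact Er.app (iha h1 h2) (ihb h1 h2)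
  | shift t ih =>
      intro k σ h1 h2
      refine Er.shift (ih ?_ ?_)
      · intro n hn
        cases n with
        | zero => rfl
        | succ n => show liftT 1 0 (σ n) = _; rw [h1 n (by omega)]; rfl
      · intro n hn
        cases n with
        | zero => omega
        | succ n => show liftT 1 0 (σ n) = _; rw [h2 n (by omega)]; exact lift_omega 1 0
  | reset t ih =>
      intro k σ h1 h2
      exact Er.reset (ih h1 h2)

lemma er_erase0 (t : Tm) : Er 0 t (eraseA t) :=
  er_applySub_omega t (fun n hn => by omega) (fun n _ => rfl)

lemma bisim_erase (t : Tm) : Bisim t (eraseA t) := er_bisim (er_erase0 t)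

lemma eraseA_closed (t : Tm) : Closed (eraseA t) :=
  closedUnder_applySub t (fun _ => omega_closed)

lemma eraseA_value {v : Tm} (hv : IsValue v) : IsValue (eraseA v) :=
  isValue_applySub hv _

def eraseP : PCtx → PCtx
  | .hole => .hole
  | .appV b E => .appV (applySub (liftSub (fun _ => OmegaTm)) b) (eraseP E)
  | .appL E s => .appL (eraseP E) (eraseA s)

lemma erp_eraseP : ∀ (E : PCtx), ErP 0 E (eraseP E) := by
  intro E
  induction E with
  | hole => exact ErP.hole 0
  | appV b E ih =>
      refine ErP.appV ?_ ih
      refine er_applySub_omega b ?_ ?_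
      · intro n hn
        cases n with
        | zero => rfl
        | succ n => omega
      · intro n hn
        cases n with
        | zero => omega
        | succ n => show liftT 1 0 OmegaTm = _; exact lift_omega 1 0
  | appL E s ih => exact ErP.appL ih (er_erase0 s)

lemma pcu_eraseP : ∀ (E : PCtx), PCU 0 (eraseP E) := by
  intro E
  induction E with
  | hole => trivial
  | appV b E ih =>
      refine ⟨?_, ih⟩
      refine closedUnder_applySub b (fun n => ?_)
      cases n with
      | zero => show ClosedUnder 1 (var 0); show 0 < 1; omega
      | succ n =>
          show ClosedUnder 1 (liftT 1 0 OmegaTm)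
          rw [lift_omega]
          exact closedUnder_mono _ (by omega) omega_closed
  | appL E s ih => exact ⟨ih, eraseA_closed s⟩

lemma pcu_comp : ∀ {k : ℕ} {E F : PCtx}, PCU k E → PCU k F → PCU k (E.comp F) := by
  intro k E F hE hF
  induction F with
  | hole => exact hE
  | appV b F ih => exact ⟨hF.1, ih hF.2⟩
  | appL F s ih => exact ⟨ih hF.1, hF.2⟩

end LamS
namespace LamS
open Tm

/-! ### Block 5: ECtxEquiv machinery -/

lemma redStar_plug {t u : Tm} (F : ECtx) (h : RedStar t u) :
    RedStar (F.plug t) (F.plug u) := by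
  induction h with
  | refl => exact Relation.ReflTransGen.refl
  | tail _ hstep ih => exact Relation.ReflTransGen.tail ih (red_plug F hstep)

lemma closedECtx_comp {F G : ECtx} (hF : ClosedECtx F) (hG : ClosedECtx G) :
    ClosedECtx (F.comp G) := by
  induction G with
  | hole => exact hF
  | appV b G ih => exact ⟨hG.1, ih hG.2⟩
  | appL G s ih => exact ⟨ih hG.1, hG.2⟩
  | resetC G ih => exact ih hG

lemma closedECtx_toECtx {E : PCtx} (h : PCU 0 E) : ClosedECtx E.toECtx := by
  induction E with
  | hole => trivial
  | appV b E ih => exact ⟨h.1, ih h.2⟩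
  | appL E s ih => exact ⟨ih h.1, h.2⟩

lemma ectxEquiv_symm {t0 t1 : Tm} (h : ECtxEquiv t0 t1) : ECtxEquiv t1 t0 := by
  intro F hF
  exact ⟨(h F hF).1.symm, (h F hF).2.symm⟩

lemma ectxEquiv_redStar_left {t0 t1 t0' : Tm} (h : ECtxEquiv t0 t1) (hr : RedStar t0 t0') :
    ECtxEquiv t0' t1 := by
  intro F hF
  have h1 := redStar_plug F hr
  constructor
  · rw [← evalsToValue_redStar_iff h1]; exact (h F hF).1
  · rw [← evalsToStuck_redStar_iff h1]; exact (h F hF).2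

lemma ectxEquiv_redStar_right {t0 t1 t1' : Tm} (h : ECtxEquiv t0 t1) (hr : RedStar t1 t1') :
    ECtxEquiv t0 t1' :=
  ectxEquiv_symm (ectxEquiv_redStar_left (ectxEquiv_symm h) hr)

lemma ectxEquiv_plug {t0 t1 : Tm} (h : ECtxEquiv t0 t1) {G : ECtx} (hG : ClosedECtx G) :
    ECtxEquiv (G.plug t0) (G.plug t1) := by
  intro F hF
  rw [← ECtx.comp_plug, ← ECtx.comp_plug]
  exact h (F.comp G) (closedECtx_comp hF hG)

lemma ectxEquiv_value_iff {t0 t1 : Tm} (h : ECtxEquiv t0 t1) :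
    EvalsToValue t0 ↔ EvalsToValue t1 := (h .hole trivial).1

lemma ectxEquiv_stuck_iff {t0 t1 : Tm} (h : ECtxEquiv t0 t1) :
    EvalsToStuck t0 ↔ EvalsToStuck t1 := (h .hole trivial).2

/-- transfer to the bodies of related λ-values, at closed value arguments. -/
lemma ectxEquiv_body {c0 c1 v : Tm} (h : ECtxEquiv (lam c0) (lam c1))
    (hv : IsValue v) (hcv : Closed v) :
    ECtxEquiv (substT 0 v c0) (substT 0 v c1) := by
  intro F hF
  have r0 : Red (F.plug (app (lam c0) v)) (F.plug (substT 0 v c0)) := Red.beta F c0 v hv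
  have r1 : Red (F.plug (app (lam c1) v)) (F.plug (substT 0 v c1)) := Red.beta F c1 v hv
  have happ := h (ECtx.appL F v) ⟨hF, hcv⟩
  constructor
  · rw [← evalsToValue_red_iff r0, ← evalsToValue_red_iff r1]; exact happ.1
  · rw [← evalsToStuck_red_iff r0, ← evalsToStuck_red_iff r1]; exact happ.2

/-- transfer to capture-reducts of related stuck terms, at closed pure contexts. -/
lemma ectxEquiv_cap {E₀ E₁ : PCtx} {s0 s1 : Tm} {Eh : PCtx}
    (h : ECtxEquiv (E₀.plug (shift s0)) (E₁.plug (shift s1))) (hP : PCU 0 Eh) :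
    ECtxEquiv (reset (substT 0 (contOf (Eh.comp E₀)) s0))
      (reset (substT 0 (contOf (Eh.comp E₁)) s1)) := by
  intro F hF
  have r0 : Red (F.plug (reset ((Eh.comp E₀).plug (shift s0))))
      (F.plug (reset (substT 0 (contOf (Eh.comp E₀)) s0))) := Red.cap F (Eh.comp E₀) s0
  have r1 : Red (F.plug (reset ((Eh.comp E₁).plug (shift s1))))
      (F.plug (reset (substT 0 (contOf (Eh.comp E₁)) s1))) := Red.cap F (Eh.comp E₁) s1
  have hG : ClosedECtx (ECtx.comp (ECtx.resetC .hole) Eh.toECtx) :=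
    closedECtx_comp (show ClosedECtx (ECtx.resetC .hole) from trivial) (closedECtx_toECtx hP)
  have happ := (ectxEquiv_plug h hG) F hF
  have e0 : (ECtx.comp (ECtx.resetC .hole) Eh.toECtx).plug (E₀.plug (shift s0))
      = reset ((Eh.comp E₀).plug (shift s0)) := by
    rw [ECtx.comp_plug, PCtx.toECtx_plug, PCtx.comp_plug]; rfl
  have e1 : (ECtx.comp (ECtx.resetC .hole) Eh.toECtx).plug (E₁.plug (shift s1))
      = reset ((Eh.comp E₁).plug (shift s1)) := by
    rw [ECtx.comp_plug, PCtx.toECtx_plug, PCtx.comp_plug]; rfl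
  rw [e0, e1] at happ
  constructor
  · rw [← evalsToValue_red_iff r0, ← evalsToValue_red_iff r1]; exact happ.1
  · rw [← evalsToStuck_red_iff r0, ← evalsToStuck_red_iff r1]; exact happ.2

end LamS
namespace LamS
open Tm

/-! ### Block 6: completeness, ECtxEquiv ⊆ Bisim -/

/-- candidate relation: closed ≡E pairs up to bisimilarity. -/
def Rcomp (a b : Tm) : Prop :=
  ∃ a₀ b₀, Closed a₀ ∧ Closed b₀ ∧ Bisim a a₀ ∧ ECtxEquiv a₀ b₀ ∧ Bisim b₀ b

lemma rcomp_symm (a b : Tm) (h : Rcomp a b) : Rcomp b a := by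
  obtain ⟨a₀, b₀, hca, hcb, h1, h2, h3⟩ := h
  exact ⟨b₀, a₀, hcb, hca, bisim_symm h3, ectxEquiv_symm h2, bisim_symm h1⟩

lemma rcomp_isSim : IsSim Rcomp := by
  rintro a b ⟨a₀, b₀, hca, hcb, h1, h2, h3⟩ l a' hs
  obtain ⟨x, hwx, hax⟩ := bisim_step h1 hs
  cases l with
  | tau =>
      have hx_closed : Closed x := tauStar_closed hwx hca
      exact ⟨b, weak_refl_tau b, x, b₀, hx_closed, hcb, hax,
        ectxEquiv_redStar_left h2 (redStar_iff_tauStar.2 hwx), h3⟩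
  | val v =>
      obtain ⟨u, hts, hstep⟩ := hwx
      obtain ⟨c0, rfl, hvval, rfl⟩ := val_step_inv hstep
      have hredstar : RedStar a₀ (lam c0) := redStar_iff_tauStar.2 hts
      have hu_closed : Closed (lam c0) := redStar_closed hredstar hca
      -- b₀ evaluates to a value
      have hv0 : EvalsToValue a₀ := by
        rw [evalsToValue_redStar_iff hredstar]
        exact evalsToValue_of_value ⟨c0, rfl⟩
      have hv1 : EvalsToValue b₀ := (ectxEquiv_value_iff h2).1 hv0
      obtain ⟨w, hwval, hredw, hirrw⟩ := hv1
      obtain ⟨c1, rfl⟩ := hwval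
      have hw_closed : Closed (lam c1) := redStar_closed hredw hcb
      -- related bodies
      have hE01 : ECtxEquiv (lam c0) (lam c1) :=
        ectxEquiv_redStar_right (ectxEquiv_redStar_left h2 hredstar) hredw
      -- erased argument
      have hveras : IsValue (eraseA v) := eraseA_value hvval
      have hmid : ECtxEquiv (substT 0 (eraseA v) c0) (substT 0 (eraseA v) c1) :=
        ectxEquiv_body hE01 hveras (eraseA_closed v)
      have hclo0 : Closed (substT 0 (eraseA v) c0) :=
        closedUnder_substT c0 hu_closed (eraseA_closed v)
      have hclo1 : Closed (substT 0 (eraseA v) c1) :=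
        closedUnder_substT c1 hw_closed (eraseA_closed v)
      -- bisimilarity to erased substitutions
      have her0 : Bisim (substT 0 v c0) (substT 0 (eraseA v) c0) :=
        er_bisim (er_subst0 (er_refl c0 1) (er_erase0 v))
      have her1 : Bisim (substT 0 v c1) (substT 0 (eraseA v) c1) :=
        er_bisim (er_subst0 (er_refl c1 1) (er_erase0 v))
      -- b₀'s weak move
      have hwb : Weak b₀ (.val v) (substT 0 v c1) :=
        ⟨lam c1, redStar_iff_tauStar.1 hredw, Step.lamApp hvval⟩
      obtain ⟨b', hwb', hyb'⟩ := bisim_weak h3 hwb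
      refine ⟨b', hwb', substT 0 (eraseA v) c0, substT 0 (eraseA v) c1, hclo0, hclo1,
        bisim_trans hax her0, hmid, bisim_trans (bisim_symm her1) hyb'⟩
  | ctx E =>
      obtain ⟨u, hts, hstep⟩ := hwx
      obtain ⟨E₀, s0, rfl, rfl⟩ := ctx_step_inv hstep
      have hredstar : RedStar a₀ (E₀.plug (shift s0)) := redStar_iff_tauStar.2 hts
      have hu_closed : Closed (E₀.plug (shift s0)) := redStar_closed hredstar hca
      have hst0 : EvalsToStuck a₀ := by
        rw [evalsToStuck_redStar_iff hredstar]
        exact ⟨_, ctlstuck_stuck E₀ s0, ⟨Relation.ReflTransGen.refl, ctlstuck_irred E₀ s0⟩⟩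
      have hst1 : EvalsToStuck b₀ := (ectxEquiv_stuck_iff h2).1 hst0
      obtain ⟨u', hstuck', hredw, hirrw⟩ := hst1
      have hu'_closed : Closed u' := redStar_closed hredw hcb
      obtain ⟨E₁, s1, rfl⟩ := closed_stuck_decomp hu'_closed hstuck'
      have hEuu : ECtxEquiv (E₀.plug (shift s0)) (E₁.plug (shift s1)) :=
        ectxEquiv_redStar_right (ectxEquiv_redStar_left h2 hredstar) hredw
      -- closedness pieces
      have hP0 : PCU 0 E₀ ∧ ClosedUnder 1 s0 := by
        have := (cu_pplug_iff E₀ (shift s0) 0).1 hu_closed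
        exact ⟨this.1, this.2⟩
      have hP1 : PCU 0 E₁ ∧ ClosedUnder 1 s1 := by
        have := (cu_pplug_iff E₁ (shift s1) 0).1 hu'_closed
        exact ⟨this.1, this.2⟩
      have hPe : PCU 0 (eraseP E) := pcu_eraseP E
      have hcont0 : Closed (contOf ((eraseP E).comp E₀)) :=
        contOf_closed (pcu_comp hPe hP0.1)
      have hcont1 : Closed (contOf ((eraseP E).comp E₁)) :=
        contOf_closed (pcu_comp hPe hP1.1)
      have hclo0 : Closed (reset (substT 0 (contOf ((eraseP E).comp E₀)) s0)) := by
        show ClosedUnder 0 (substT 0 _ s0)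
        exact closedUnder_substT s0 hP0.2 hcont0
      have hclo1 : Closed (reset (substT 0 (contOf ((eraseP E).comp E₁)) s1)) := by
        show ClosedUnder 0 (substT 0 _ s1)
        exact closedUnder_substT s1 hP1.2 hcont1
      have hmid : ECtxEquiv (reset (substT 0 (contOf ((eraseP E).comp E₀)) s0))
          (reset (substT 0 (contOf ((eraseP E).comp E₁)) s1)) :=
        ectxEquiv_cap hEuu hPe
      have her0 : Bisim (reset (substT 0 (contOf (E.comp E₀)) s0))
          (reset (substT 0 (contOf ((eraseP E).comp E₀)) s0)) :=
        er_bisim (Er.reset (er_subst0 (er_refl s0 1)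
          (er_contOf (erp_comp (erp_eraseP E) (erp_refl E₀ 0)))))
      have her1 : Bisim (reset (substT 0 (contOf (E.comp E₁)) s1))
          (reset (substT 0 (contOf ((eraseP E).comp E₁)) s1)) :=
        er_bisim (Er.reset (er_subst0 (er_refl s1 1)
          (er_contOf (erp_comp (erp_eraseP E) (erp_refl E₁ 0)))))
      have hwb : Weak b₀ (.ctx E) (reset (substT 0 (contOf (E.comp E₁)) s1)) :=
        ⟨E₁.plug (shift s1), redStar_iff_tauStar.1 hredw, step_ctx_of_decomp E₁ s1 E⟩
      obtain ⟨b', hwb', hyb'⟩ := bisim_weak h3 hwb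
      exact ⟨b', hwb', _, _, hclo0, hclo1, bisim_trans hax her0, hmid,
        bisim_trans (bisim_symm her1) hyb'⟩

lemma ectxEquiv_bisim {t0 t1 : Tm} (hc0 : Closed t0) (hc1 : Closed t1)
    (h : ECtxEquiv t0 t1) : Bisim t0 t1 :=
  ⟨Rcomp, isBisim_of_symm rcomp_symm rcomp_isSim,
    t0, t1, hc0, hc1, bisim_refl t0, h, bisim_refl t1⟩

end LamS
namespace LamS
open Tm

/-! ### Block 7a: Howe closure utilities -/

lemma howe_refl : ∀ t, Howe t t := by
  intro t
  induction t with
  | var n => exact Howe.compVar n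
  | lam t ih => exact Howe.compLam ih
  | app a b iha ihb => exact Howe.compApp iha ihb
  | shift t ih => exact Howe.compShift ih
  | reset t ih => exact Howe.compReset ih

lemma oeb_refl (t : Tm) : OpenExt Bisim t t := fun σ _ => bisim_refl _

lemma oeb_of_closed {a b : Tm} (hca : Closed a) (hcb : Closed b) (h : Bisim a b) :
    OpenExt Bisim a b := by
  intro σ hσ
  rw [applySub_closed hca, applySub_closed hcb]
  exact h

lemma oeb_trans {a b c : Tm} (h1 : OpenExt Bisim a b) (h2 : OpenExt Bisim b c) :
    OpenExt Bisim a c := fun σ hσ => bisim_trans (h1 σ hσ) (h2 σ hσ)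

def SubValue (σ : ℕ → Tm) : Prop := ∀ n, IsValue (σ n) ∨ σ n = var n

lemma closingSub_subValue {σ : ℕ → Tm} (h : ClosingSub σ) : SubValue σ :=
  fun n => .inl (h n).1

lemma liftSub_subValue {σ : ℕ → Tm} (h : SubValue σ) : SubValue (liftSub σ) := by
  intro n
  cases n with
  | zero => exact .inr rfl
  | succ n =>
      rcases h n with hv | he
      · exact .inl (isValue_liftT hv 1 0)
      · right; show liftT 1 0 (σ n) = _; rw [he]; rfl

lemma comp_closing {σ' σ : ℕ → Tm} (h' : ClosingSub σ') (h : SubValue σ) :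
    ClosingSub (fun n => applySub σ' (σ n)) := by
  intro n
  rcases h n with hv | he
  · exact ⟨isValue_applySub hv σ', closed_applySub h'⟩
  · show IsValue (applySub σ' (σ n)) ∧ Closed (applySub σ' (σ n))
    rw [he]; exact h' n

lemma oeb_applySub {a b : Tm} (h : OpenExt Bisim a b) {σ : ℕ → Tm} (hσ : SubValue σ) :
    OpenExt Bisim (applySub σ a) (applySub σ b) := by
  intro σ' hσ'
  rw [applySub_applySub, applySub_applySub]
  exact h _ (comp_closing hσ' hσ)

lemma oeb_liftT {a b : Tm} (h : OpenExt Bisim a b) (d c : ℕ) :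
    OpenExt Bisim (liftT d c a) (liftT d c b) := by
  intro σ hσ
  rw [liftT_eq_renT, liftT_eq_renT, applySub_renT, applySub_renT]
  exact h _ (fun n => hσ _)

lemma howe_liftT : ∀ {a b : Tm}, Howe a b → ∀ (d c : ℕ),
    Howe (liftT d c a) (liftT d c b) := by
  intro a b h
  induction h with
  | base h => intro d c; exact Howe.base (oeb_liftT h d c)
  | right h1 h2 ih => intro d c; exact Howe.right (ih d c) (oeb_liftT h2 d c)
  | compVar n =>
      intro d c
      show Howe (if n < c then _ else _) (if n < c then _ else _)
      split <;> exact Howe.compVar _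
  | compLam h ih => intro d c; exact Howe.compLam (ih d (c+1))
  | compApp h1 h2 ih1 ih2 => intro d c; exact Howe.compApp (ih1 d c) (ih2 d c)
  | compShift h ih => intro d c; exact Howe.compShift (ih d (c+1))
  | compReset h ih => intro d c; exact Howe.compReset (ih d c)

lemma howe_applySub : ∀ {a b : Tm}, Howe a b → ∀ {σ : ℕ → Tm}, SubValue σ →
    Howe (applySub σ a) (applySub σ b) := by
  intro a b h
  induction h with
  | base h => intro σ hσ; exact Howe.base (oeb_applySub h hσ)
  | right h1 h2 ih => intro σ hσ; exact Howe.right (ih hσ) (oeb_applySub h2 hσ)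
  | compVar n => intro σ hσ; exact howe_refl _
  | compLam h ih => intro σ hσ; exact Howe.compLam (ih (liftSub_subValue hσ))
  | compApp h1 h2 ih1 ih2 => intro σ hσ; exact Howe.compApp (ih1 hσ) (ih2 hσ)
  | compShift h ih => intro σ hσ; exact Howe.compShift (ih (liftSub_subValue hσ))
  | compReset h ih => intro σ hσ; exact Howe.compReset (ih hσ)

lemma howe_substT_common {v w : Tm} (hvw : Howe v w) :
    ∀ (x : Tm) (j : ℕ), Howe (substT j v x) (substT j w x) := by
  intro x
  induction x with
  | var n =>
      intro j
      show Howe (if n = j then _ else _) (if n = j then _ else _)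
      by_cases h : n = j
      · rw [if_pos h, if_pos h]; exact howe_liftT hvw j 0
      · rw [if_neg h, if_neg h]; split <;> exact Howe.compVar _
  | lam t ih => intro j; exact Howe.compLam (ih (j+1))
  | app a b iha ihb => intro j; exact Howe.compApp (iha j) (ihb j)
  | shift t ih => intro j; exact Howe.compShift (ih (j+1))
  | reset t ih => intro j; exact Howe.compReset (ih j)

lemma oeb_substT_common {a b : Tm} (h : OpenExt Bisim a b) {w : Tm} (hw : IsValue w)
    (j : ℕ) : OpenExt Bisim (substT j w a) (substT j w b) := by
  intro σ hσ
  rw [applySub_substT, applySub_substT]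
  refine h _ (fun n => ?_)
  by_cases h1 : n = j
  · rw [if_pos h1]
    exact ⟨isValue_applySub (isValue_liftT hw j 0) σ, closed_applySub hσ⟩
  · rw [if_neg h1]
    split
    · exact hσ _
    · exact hσ _

lemma howe_substT : ∀ {a b : Tm}, Howe a b → ∀ {v w : Tm}, Howe v w → IsValue w →
    ∀ (j : ℕ), Howe (substT j v a) (substT j w b) := by
  intro a b h
  induction h with
  | base h =>
      intro v w hvw hw j
      exact Howe.right (howe_substT_common hvw _ j) (oeb_substT_common h hw j)
  | right h1 h2 ih =>
      intro v w hvw hw j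
      exact Howe.right (ih hvw hw j) (oeb_substT_common h2 hw j)
  | compVar n =>
      intro v w hvw hw j
      exact howe_substT_common hvw _ j
  | compLam h ih => intro v w hvw hw j; exact Howe.compLam (ih hvw hw (j+1))
  | compApp h1 h2 ih1 ih2 =>
      intro v w hvw hw j
      exact Howe.compApp (ih1 hvw hw j) (ih2 hvw hw j)
  | compShift h ih => intro v w hvw hw j; exact Howe.compShift (ih hvw hw (j+1))
  | compReset h ih => intro v w hvw hw j; exact Howe.compReset (ih hvw hw j)

lemma howe_subst0 {a b v w : Tm} (h : Howe a b) (hvw : Howe v w) (hw : IsValue w) :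
    Howe (substT 0 v a) (substT 0 w b) := howe_substT h hvw hw 0

/-! Howe inversion lemmas -/

lemma howe_inv_var : ∀ {t c : Tm}, Howe t c → ∀ {n : ℕ}, t = var n →
    OpenExt Bisim (var n) c := by
  intro t c h
  induction h with
  | base h => intro n he; subst he; exact h
  | right h1 h2 ih => intro n he; exact oeb_trans (ih he) h2
  | compVar m => intro n he; cases he; exact oeb_refl _
  | compLam h ih => intro n he; cases he
  | compApp h1 h2 ih1 ih2 => intro n he; cases he
  | compShift h ih => intro n he; cases he
  | compReset h ih => intro n he; cases he

lemma howe_inv_lam : ∀ {t c : Tm}, Howe t c → ∀ {a : Tm}, t = lam a →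
    ∃ a', Howe a a' ∧ OpenExt Bisim (lam a') c := by
  intro t c h
  induction h with
  | base h => intro a he; subst he; exact ⟨a, howe_refl a, h⟩
  | right h1 h2 ih =>
      intro a he
      obtain ⟨a', h3, h4⟩ := ih he
      exact ⟨a', h3, oeb_trans h4 h2⟩
  | compVar m => intro a he; cases he
  | compLam h ih => intro a he; cases he; exact ⟨_, h, oeb_refl _⟩
  | compApp h1 h2 ih1 ih2 => intro a he; cases he
  | compShift h ih => intro a he; cases he
  | compReset h ih => intro a he; cases he

lemma howe_inv_app : ∀ {t c : Tm}, Howe t c → ∀ {x y : Tm}, t = app x y →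
    ∃ x' y', Howe x x' ∧ Howe y y' ∧ OpenExt Bisim (app x' y') c := by
  intro t c h
  induction h with
  | base h => intro x y he; subst he; exact ⟨x, y, howe_refl x, howe_refl y, h⟩
  | right h1 h2 ih =>
      intro x y he
      obtain ⟨x', y', h3, h4, h5⟩ := ih he
      exact ⟨x', y', h3, h4, oeb_trans h5 h2⟩
  | compVar m => intro x y he; cases he
  | compLam h ih => intro x y he; cases he
  | compApp h1 h2 ih1 ih2 => intro x y he; cases he; exact ⟨_, _, h1, h2, oeb_refl _⟩
  | compShift h ih => intro x y he; cases he
  | compReset h ih => intro x y he; cases he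

lemma howe_inv_shift : ∀ {t c : Tm}, Howe t c → ∀ {a : Tm}, t = shift a →
    ∃ a', Howe a a' ∧ OpenExt Bisim (shift a') c := by
  intro t c h
  induction h with
  | base h => intro a he; subst he; exact ⟨a, howe_refl a, h⟩
  | right h1 h2 ih =>
      intro a he
      obtain ⟨a', h3, h4⟩ := ih he
      exact ⟨a', h3, oeb_trans h4 h2⟩
  | compVar m => intro a he; cases he
  | compLam h ih => intro a he; cases he
  | compApp h1 h2 ih1 ih2 => intro a he; cases he
  | compShift h ih => intro a he; cases he; exact ⟨_, h, oeb_refl _⟩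
  | compReset h ih => intro a he; cases he

lemma howe_inv_reset : ∀ {t c : Tm}, Howe t c → ∀ {a : Tm}, t = reset a →
    ∃ a', Howe a a' ∧ OpenExt Bisim (reset a') c := by
  intro t c h
  induction h with
  | base h => intro a he; subst he; exact ⟨a, howe_refl a, h⟩
  | right h1 h2 ih =>
      intro a he
      obtain ⟨a', h3, h4⟩ := ih he
      exact ⟨a', h3, oeb_trans h4 h2⟩
  | compVar m => intro a he; cases he
  | compLam h ih => intro a he; cases he
  | compApp h1 h2 ih1 ih2 => intro a he; cases he
  | compShift h ih => intro a he; cases he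
  | compReset h ih => intro a he; cases he; exact ⟨_, h, oeb_refl _⟩

/-! PCtx Howe helpers -/

lemma pctxHowe_refl : ∀ E, PCtxHowe E E := by
  intro E
  induction E with
  | hole => exact PCtxHowe.hole
  | appV b E ih => exact PCtxHowe.appV (howe_refl b) ih
  | appL E s ih => exact PCtxHowe.appL ih (howe_refl s)

lemma pctxHowe_liftC : ∀ {E E'}, PCtxHowe E E' → ∀ (d c : ℕ),
    PCtxHowe (PCtx.liftC d c E) (PCtx.liftC d c E') := by
  intro E E' h
  induction h with
  | hole => intro d c; exact PCtxHowe.hole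
  | appV hb hE ih => intro d c; exact PCtxHowe.appV (howe_liftT hb d (c+1)) (ih d c)
  | appL hE hs ih => intro d c; exact PCtxHowe.appL (ih d c) (howe_liftT hs d c)

lemma howe_plug : ∀ {E E'}, PCtxHowe E E' → ∀ {r r' : Tm}, Howe r r' →
    Howe (E.plug r) (E'.plug r') := by
  intro E E' h
  induction h with
  | hole => intro r r' hr; exact hr
  | appV hb hE ih => intro r r' hr; exact ih (Howe.compApp (Howe.compLam hb) hr)
  | appL hE hs ih => intro r r' hr; exact ih (Howe.compApp hr hs)

lemma howe_contOf {E E' : PCtx} (h : PCtxHowe E E') : Howe (contOf E) (contOf E') :=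
  Howe.compLam (Howe.compReset (howe_plug (pctxHowe_liftC h 1 0) (Howe.compVar 0)))

lemma pctxHowe_comp : ∀ {E E' F F'}, PCtxHowe E E' → PCtxHowe F F' →
    PCtxHowe (E.comp F) (E'.comp F') := by
  intro E E' F F' hE hF
  induction hF with
  | hole => exact hE
  | appV hb h ih => exact PCtxHowe.appV hb ih
  | appL h hs ih => exact PCtxHowe.appL ih hs

/-! canonical closing substitution -/

def sigZ : ℕ → Tm := fun _ => lam (var 0)

lemma closing_sigZ : ClosingSub sigZ := by
  intro n
  refine ⟨⟨var 0, rfl⟩, ?_⟩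
  show (0:ℕ) < 1
  omega

lemma subValue_liftSigZ : SubValue (liftSub sigZ) :=
  liftSub_subValue (closingSub_subValue closing_sigZ)

lemma liftSigZ_closed1 : ∀ n, n < 1 → liftSub sigZ n = var n := by
  intro n hn
  cases n with
  | zero => rfl
  | succ n => omega

lemma cu1_applySub_liftSigZ (x : Tm) : ClosedUnder 1 (applySub (liftSub sigZ) x) := by
  refine closedUnder_applySub x (fun n => ?_)
  cases n with
  | zero => show (0:ℕ) < 1; omega
  | succ n =>
      show ClosedUnder 1 (liftT 1 0 (lam (var 0)))
      have : ClosedUnder 0 (lam (var 0)) := by show (0:ℕ) < 1; omega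
      rw [liftT_closed _ _ this]
      exact closedUnder_mono _ (by omega) this

end LamS
namespace LamS
open Tm

/-! ### Block 7b: closed labels, runs, value partners -/

def GoodLab : Label → Prop
  | .tau => True
  | .val v => Closed v ∧ IsValue v
  | .ctx E => PCU 0 E

lemma labHowe_tau_inv {l' : Label} (h : LabHowe .tau l') : l' = .tau := by
  cases l' <;> simp [LabHowe] at h ⊢

lemma labHowe_val_inv {v : Tm} {l' : Label} (h : LabHowe (.val v) l') :
    ∃ v', l' = .val v' ∧ Closed v ∧ Closed v' ∧ Howe v v' := by
  cases l' with
  | tau => exact absurd h (by simp [LabHowe])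
  | val v' => exact ⟨v', rfl, h⟩
  | ctx E => exact absurd h (by simp [LabHowe])

lemma labHowe_ctx_inv {E : PCtx} {l' : Label} (h : LabHowe (.ctx E) l') :
    ∃ E', l' = .ctx E' ∧ PCtxHowe E E' := by
  cases l' with
  | tau => exact absurd h (by simp [LabHowe])
  | val v' => exact absurd h (by simp [LabHowe])
  | ctx E' => exact ⟨E', rfl, h⟩

lemma labHowe_refl_of_good : ∀ {l : Label}, GoodLab l → LabHowe l l := by
  intro l h
  cases l with
  | tau => trivial
  | val v => exact ⟨h.1, h.1, howe_refl v⟩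
  | ctx E => exact pctxHowe_refl E

lemma step_closed {a : Tm} {l : Label} {a' : Tm} (h : Step a l a') (hc : Closed a)
    (hl : GoodLab l) : Closed a' := by
  cases l with
  | tau => exact red_closed (step_red h) hc
  | val v =>
      obtain ⟨c, rfl, hvval, rfl⟩ := val_step_inv h
      exact closedUnder_substT c hc hl.1
  | ctx E =>
      obtain ⟨E₀, s, rfl, rfl⟩ := ctx_step_inv h
      have h2 := (cu_pplug_iff E₀ (shift s) 0).1 hc
      show ClosedUnder 0 (substT 0 _ s)
      exact closedUnder_substT s h2.2 (contOf_closed (pcu_comp hl h2.1))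

lemma weak_closed {b : Tm} {l : Label} {b' : Tm} (h : Weak b l b') (hc : Closed b)
    (hl : GoodLab l) : Closed b' := by
  cases l with
  | tau => exact tauStar_closed h hc
  | val v =>
      obtain ⟨u, hts, hstep⟩ := h
      exact step_closed hstep (tauStar_closed hts hc) hl
  | ctx E =>
      obtain ⟨u, hts, hstep⟩ := h
      exact step_closed hstep (tauStar_closed hts hc) hl

lemma tauStar_plug (F : ECtx) {t u : Tm} (h : TauStar t u) :
    TauStar (F.plug t) (F.plug u) :=
  redStar_iff_tauStar.1 (redStar_plug F (redStar_iff_tauStar.2 h))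

lemma tauStar_appL {t u s : Tm} (h : TauStar t u) : TauStar (app t s) (app u s) :=
  tauStar_plug (.appL .hole s) h

lemma tauStar_appR {t u : Tm} (b : Tm) (h : TauStar t u) :
    TauStar (app (lam b) t) (app (lam b) u) :=
  tauStar_plug (.appV b .hole) h

lemma tauStar_reset {t u : Tm} (h : TauStar t u) : TauStar (reset t) (reset u) :=
  tauStar_plug (.resetC .hole) h

lemma howe_bisim_fold {a m b : Tm} (h1 : Howe a m) (h2 : Bisim m b) (hcm : Closed m)
    (hcb : Closed b) : Howe a b :=
  Howe.right h1 (oeb_of_closed hcm hcb h2)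

/-- from a Howe pair with a λ on the left (both closed), extract a closed body pair
    and the τ-run of the partner to a λ. -/
lemma howe_value_partner {c : Tm} {p : Tm} (h : Howe (lam c) p)
    (hc : Closed (lam c)) (hp : Closed p) :
    ∃ c2 p1, ClosedUnder 1 c2 ∧ ClosedUnder 1 p1 ∧ Howe c c2 ∧
      Bisim (lam c2) p ∧ TauStar p (lam p1) ∧ OpenExt Bisim c2 p1 := by
  obtain ⟨c2₀, h1, h2⟩ := howe_inv_lam h rfl
  set c2 := applySub (liftSub sigZ) c2₀ with hc2
  have hhc2 : Howe c c2 := by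
    have := howe_applySub h1 subValue_liftSigZ
    rwa [applySub_eq_self (show ClosedUnder 1 c from hc) liftSigZ_closed1] at this
  have hb : Bisim (lam c2) p := by
    have := h2 sigZ closing_sigZ
    rwa [show applySub sigZ (lam c2₀) = lam c2 from rfl, applySub_closed hp] at this
  -- run p to a value
  obtain ⟨y, hwy, hby⟩ := bisim_step hb (Step.lamApp (v := lam (var 0)) ⟨_, rfl⟩)
  obtain ⟨u, hts, hstep⟩ := hwy
  obtain ⟨p1, rfl, _, rfl⟩ := val_step_inv hstep
  have hclam : Closed (lam p1) := tauStar_closed hts hp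
  refine ⟨c2, p1, cu1_applySub_liftSigZ c2₀, hclam, hhc2, hb, hts, ?_⟩
  -- open extension between the bodies
  intro σ hσ
  rw [applySub_closedUnder1 (cu1_applySub_liftSigZ c2₀) σ,
      applySub_closedUnder1 (show ClosedUnder 1 p1 from hclam) σ]
  obtain ⟨hval, hclo⟩ := hσ 0
  obtain ⟨y', hwy', hby'⟩ := bisim_step hb (Step.lamApp (v := σ 0) hval)
  obtain ⟨u', hts', hstep'⟩ := hwy'
  obtain ⟨p1', he, _, rfl⟩ := val_step_inv hstep'
  subst he
  have : lam p1' = lam p1 := by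
    exact redstar_det (redStar_iff_tauStar.2 hts) (value_irred ⟨_, rfl⟩) _
      (redStar_iff_tauStar.2 hts') (value_irred ⟨_, rfl⟩)
  cases this
  exact hby'

/-- τ-run of the partner of a closed value. -/
lemma howe_value_run {v m : Tm} (h : Howe v m) (hv : IsValue v) (hcv : Closed v)
    (hcm : Closed m) :
    ∃ m1, TauStar m (lam m1) ∧ Howe v (lam m1) ∧ Closed (lam m1) := by
  obtain ⟨w, rfl⟩ := hv
  obtain ⟨c2, m1, _, hcu, hw, hb, hts, hoeb⟩ := howe_value_partner h hcv hcm
  exact ⟨m1, hts, Howe.compLam (Howe.right hw hoeb), hcu⟩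

end LamS
namespace LamS
open Tm

/-! ### Block 7c: key lemma of Howe's method (closed labels) -/

lemma howe_app_closed {x y b : Tm} (hcx : Closed x) (hcy : Closed y) (hcb : Closed b)
    (h : Howe (app x y) b) :
    ∃ p q, Closed p ∧ Closed q ∧ Howe x p ∧ Howe y q ∧ Bisim (app p q) b := by
  obtain ⟨p₀, q₀, h1, h2, h3⟩ := howe_inv_app h rfl
  refine ⟨applySub sigZ p₀, applySub sigZ q₀, closed_applySub closing_sigZ,
    closed_applySub closing_sigZ, ?_, ?_, ?_⟩
  · have := howe_applySub h1 (closingSub_subValue closing_sigZ)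
    rwa [applySub_closed hcx] at this
  · have := howe_applySub h2 (closingSub_subValue closing_sigZ)
    rwa [applySub_closed hcy] at this
  · have := h3 sigZ closing_sigZ
    rwa [applySub_closed hcb] at this

lemma howe_reset_closed {x b : Tm} (hcx : Closed x) (hcb : Closed b)
    (h : Howe (reset x) b) :
    ∃ p, Closed p ∧ Howe x p ∧ Bisim (reset p) b := by
  obtain ⟨p₀, h1, h3⟩ := howe_inv_reset h rfl
  refine ⟨applySub sigZ p₀, closed_applySub closing_sigZ, ?_, ?_⟩
  · have := howe_applySub h1 (closingSub_subValue closing_sigZ)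
    rwa [applySub_closed hcx] at this
  · have := h3 sigZ closing_sigZ
    rwa [applySub_closed hcb] at this

lemma howe_shift_closed {x b : Tm} (hcx : Closed (shift x)) (hcb : Closed b)
    (h : Howe (shift x) b) :
    ∃ s2, ClosedUnder 1 s2 ∧ Howe x s2 ∧ Bisim (shift s2) b := by
  obtain ⟨s₀, h1, h3⟩ := howe_inv_shift h rfl
  refine ⟨applySub (liftSub sigZ) s₀, cu1_applySub_liftSigZ s₀, ?_, ?_⟩
  · have := howe_applySub h1 subValue_liftSigZ
    rwa [applySub_eq_self (show ClosedUnder 1 x from hcx) liftSigZ_closed1] at this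
  · have := h3 sigZ closing_sigZ
    rwa [applySub_closed hcb] at this

lemma howe_key : ∀ {a : Tm} {l : Label} {a' : Tm}, Step a l a' →
    ∀ {b : Tm} {l' : Label}, Closed a → Closed b → Howe a b →
    LabHowe l l' → GoodLab l → GoodLab l' →
    ∃ b', Weak b l' b' ∧ Howe a' b' ∧ Closed a' ∧ Closed b' := by
  intro a l a' h
  induction h with
  | @beta c v hv =>
      intro b l' hca hcb hw hl gl gl'
      obtain rfl := labHowe_tau_inv hl
      obtain ⟨p, q, hcp, hcq, hp, hq, hb⟩ := howe_app_closed hca.1 hca.2 hcb hw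
      obtain ⟨c2, p1, hcu2, hcu1, hc2, hbp, htsp, hoeb⟩ := howe_value_partner hp hca.1 hcp
      obtain ⟨m1, htsq, hvq, hclam⟩ := howe_value_run hq hv hca.2 hcq
      have hrun : TauStar (app p q) (substT 0 (lam m1) p1) :=
        ((tauStar_appL htsp).trans (tauStar_appR p1 htsq)).tail (Step.beta ⟨m1, rfl⟩)
      obtain ⟨b', htsb, hbm⟩ := isSim_tauStar bisim_isSim hb hrun
      have hres : Howe (substT 0 v c) (substT 0 (lam m1) p1) :=
        howe_subst0 (Howe.right hc2 hoeb) hvq ⟨m1, rfl⟩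
      have hclo2 : Closed (substT 0 (lam m1) p1) := closedUnder_substT p1 hcu1 hclam
      have hclo3 : Closed b' := tauStar_closed htsb hcb
      exact ⟨b', htsb, howe_bisim_fold hres hbm hclo2 hclo3,
        closedUnder_substT c hca.1 hca.2, hclo3⟩
  | @resetVal v hv =>
      intro b l' hca hcb hw hl gl gl'
      obtain rfl := labHowe_tau_inv hl
      have hcv : Closed v := hca
      obtain ⟨p, hcp, hp, hb⟩ := howe_reset_closed hcv hcb hw
      obtain ⟨m1, htsq, hvq, hclam⟩ := howe_value_run hp hv hcv hcp
      have hrun : TauStar (reset p) (lam m1) :=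
        (tauStar_reset htsq).tail (Step.resetVal ⟨m1, rfl⟩)
      obtain ⟨b', htsb, hbm⟩ := isSim_tauStar bisim_isSim hb hrun
      have hclo3 : Closed b' := tauStar_closed htsb hcb
      exact ⟨b', htsb, howe_bisim_fold hvq hbm hclam hclo3, hcv, hclo3⟩
  | @appL t0 t0' t1 h ih =>
      intro b l' hca hcb hw hl gl gl'
      obtain rfl := labHowe_tau_inv hl
      obtain ⟨p, q, hcp, hcq, hp, hq, hb⟩ := howe_app_closed hca.1 hca.2 hcb hw
      obtain ⟨p'', hwp, hres, hct0', hcp''⟩ :=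
        ih hca.1 hcp hp (show LabHowe .tau .tau from trivial) trivial trivial
      have hrun : TauStar (app p q) (app p'' q) := tauStar_appL hwp
      obtain ⟨b', htsb, hbm⟩ := isSim_tauStar bisim_isSim hb hrun
      have hclo3 : Closed b' := tauStar_closed htsb hcb
      exact ⟨b', htsb,
        howe_bisim_fold (Howe.compApp hres hq) hbm ⟨hcp'', hcq⟩ hclo3,
        ⟨hct0', hca.2⟩, hclo3⟩
  | @appR v t t' hv h ih =>
      intro b l' hca hcb hw hl gl gl'
      obtain rfl := labHowe_tau_inv hl
      obtain ⟨p, q, hcp, hcq, hp, hq, hb⟩ := howe_app_closed hca.1 hca.2 hcb hw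
      obtain ⟨m1, htsp, hvp, hclam⟩ := howe_value_run hp hv hca.1 hcp
      obtain ⟨q'', hwq, hres, hct', hcq''⟩ :=
        ih hca.2 hcq hq (show LabHowe .tau .tau from trivial) trivial trivial
      have hrun : TauStar (app p q) (app (lam m1) q'') :=
        (tauStar_appL htsp).trans (tauStar_appR m1 hwq)
      obtain ⟨b', htsb, hbm⟩ := isSim_tauStar bisim_isSim hb hrun
      have hclo3 : Closed b' := tauStar_closed htsb hcb
      exact ⟨b', htsb,
        howe_bisim_fold (Howe.compApp hvp hres) hbm ⟨hclam, hcq''⟩ hclo3,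
        ⟨hca.1, hct'⟩, hclo3⟩
  | @resetT t t' h ih =>
      intro b l' hca hcb hw hl gl gl'
      obtain rfl := labHowe_tau_inv hl
      obtain ⟨p, hcp, hp, hb⟩ := howe_reset_closed (show Closed t from hca) hcb hw
      obtain ⟨p'', hwp, hres, hct', hcp''⟩ :=
        ih (show Closed t from hca) hcp hp (show LabHowe .tau .tau from trivial) trivial trivial
      have hrun : TauStar (reset p) (reset p'') := tauStar_reset hwp
      obtain ⟨b', htsb, hbm⟩ := isSim_tauStar bisim_isSim hb hrun
      have hclo3 : Closed b' := tauStar_closed htsb hcb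
      exact ⟨b', htsb,
        howe_bisim_fold (Howe.compReset hres) hbm hcp'' hclo3, hct', hclo3⟩
  | @resetCap t t' h ih =>
      intro b l' hca hcb hw hl gl gl'
      obtain rfl := labHowe_tau_inv hl
      obtain ⟨p, hcp, hp, hb⟩ := howe_reset_closed (show Closed t from hca) hcb hw
      obtain ⟨p'', hwp, hres, hct', hcp''⟩ :=
        ih (show Closed t from hca) hcp hp
          (show LabHowe (.ctx .hole) (.ctx .hole) from PCtxHowe.hole) trivial trivial
      obtain ⟨u, hts, hstep⟩ := hwp
      have hrun : TauStar (reset p) p'' := (tauStar_reset hts).tail (Step.resetCap hstep)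
      obtain ⟨b', htsb, hbm⟩ := isSim_tauStar bisim_isSim hb hrun
      have hclo3 : Closed b' := tauStar_closed htsb hcb
      exact ⟨b', htsb, howe_bisim_fold hres hbm hcp'' hclo3, hct', hclo3⟩
  | @lamApp c v hv =>
      intro b l' hca hcb hw hl gl gl'
      obtain ⟨v', rfl, hclv, hclv', hvv'⟩ := labHowe_val_inv hl
      have hv' : IsValue v' := gl'.2
      obtain ⟨c2, p1, hcu2, hcu1, hc2, hbp, htsp, hoeb⟩ := howe_value_partner hw hca hcb
      obtain ⟨b', hwb, hbm⟩ := bisim_step hbp (Step.lamApp (v := v') hv')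
      have hres : Howe (substT 0 v c) (substT 0 v' c2) := howe_subst0 hc2 hvv' hv'
      have hclo2 : Closed (substT 0 v' c2) := closedUnder_substT c2 hcu2 hclv'
      have hclo3 : Closed b' := weak_closed hwb hcb gl'
      exact ⟨b', hwb, howe_bisim_fold hres hbm hclo2 hclo3,
        closedUnder_substT c hca hclv, hclo3⟩
  | @shiftCap s E =>
      intro b l' hca hcb hw hl gl gl'
      obtain ⟨E', rfl, hEE⟩ := labHowe_ctx_inv hl
      obtain ⟨s2, hcu, hs2, hb⟩ := howe_shift_closed hca hcb hw
      obtain ⟨b', hwb, hbm⟩ := bisim_step hb (Step.shiftCap (t := s2) E')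
      have hres : Howe (reset (substT 0 (contOf E) s)) (reset (substT 0 (contOf E') s2)) :=
        Howe.compReset (howe_subst0 hs2 (howe_contOf hEE) ⟨_, rfl⟩)
      have hclo1 : Closed (reset (substT 0 (contOf E) s)) := by
        show ClosedUnder 0 (substT 0 _ s)
        exact closedUnder_substT s hca (contOf_closed gl)
      have hclo2 : Closed (reset (substT 0 (contOf E') s2)) := by
        show ClosedUnder 0 (substT 0 _ s2)
        exact closedUnder_substT s2 hcu (contOf_closed gl')
      have hclo3 : Closed b' := weak_closed hwb hcb gl'
      exact ⟨b', hwb, howe_bisim_fold hres hbm hclo2 hclo3, hclo1, hclo3⟩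
  | @capL t0 t0' t1 E h ih =>
      intro b l' hca hcb hw hl gl gl'
      obtain ⟨E₂, rfl, hEE⟩ := labHowe_ctx_inv hl
      obtain ⟨p, q, hcp, hcq, hp, hq, hb⟩ := howe_app_closed hca.1 hca.2 hcb hw
      obtain ⟨p'', hwp, hres, hct0', hcp''⟩ :=
        ih hca.1 hcp hp
          (show LabHowe (.ctx (.appL E t1)) (.ctx (.appL E₂ q)) from PCtxHowe.appL hEE hq)
          (show GoodLab (.ctx (.appL E t1)) from ⟨gl, hca.2⟩)
          (show GoodLab (.ctx (.appL E₂ q)) from ⟨gl', hcq⟩)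
      obtain ⟨u, hts, hstep⟩ := hwp
      have hw2 : Weak (app p q) (.ctx E₂) p'' := ⟨app u q, tauStar_appL hts, Step.capL hstep⟩
      obtain ⟨b', hwb, hbm⟩ := bisim_weak hb hw2
      have hclo3 : Closed b' := weak_closed hwb hcb gl'
      exact ⟨b', hwb, howe_bisim_fold hres hbm hcp'' hclo3, hct0', hclo3⟩
  | @capR c t t' E h ih =>
      intro b l' hca hcb hw hl gl gl'
      obtain ⟨E₂, rfl, hEE⟩ := labHowe_ctx_inv hl
      obtain ⟨p, q, hcp, hcq, hp, hq, hb⟩ := howe_app_closed hca.1 hca.2 hcb hw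
      obtain ⟨c2, p1, hcu2, hcu1, hc2, hbp, htsp, hoeb⟩ := howe_value_partner hp hca.1 hcp
      have hcp1 : Howe c p1 := Howe.right hc2 hoeb
      obtain ⟨q'', hwq, hres, hct', hcq''⟩ :=
        ih hca.2 hcq hq
          (show LabHowe (.ctx (.appV c E)) (.ctx (.appV p1 E₂)) from PCtxHowe.appV hcp1 hEE)
          (show GoodLab (.ctx (.appV c E)) from ⟨hca.1, gl⟩)
          (show GoodLab (.ctx (.appV p1 E₂)) from ⟨hcu1, gl'⟩)
      obtain ⟨u, hts, hstep⟩ := hwq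
      have hw2 : Weak (app p q) (.ctx E₂) q'' :=
        ⟨app (lam p1) u, (tauStar_appL htsp).trans (tauStar_appR p1 hts), Step.capR hstep⟩
      obtain ⟨b', hwb, hbm⟩ := bisim_weak hb hw2
      have hclo3 : Closed b' := weak_closed hwb hcb gl'
      exact ⟨b', hwb, howe_bisim_fold hres hbm hcq'' hclo3, hct', hclo3⟩

end LamS
namespace LamS
open Tm

/-! ### Block 8: soundness assembly and the easy direction -/

lemma howe_ctx_plug {t0 t1 : Tm} (h : Bisim t0 t1) (hc0 : Closed t0) (hc1 : Closed t1) :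
    ∀ C : Ctx, Howe (C.plug t0) (C.plug t1) := by
  intro C
  induction C with
  | hole => exact Howe.base (oeb_of_closed hc0 hc1 h)
  | lam C ih => exact Howe.compLam ih
  | appL C s ih => exact Howe.compApp ih (howe_refl s)
  | appR s C ih => exact Howe.compApp (howe_refl s) ih
  | shift C ih => exact Howe.compShift ih
  | reset C ih => exact Howe.compReset ih

lemma ctx_plug_closedUnder : ∀ (C : Ctx) {n : ℕ} {t : Tm}, CtxClosedUnder n C →
    ClosedUnder n t → ClosedUnder n (C.plug t) := by
  intro C
  induction C with
  | hole => intro n t _ h; exact h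
  | lam C ih => intro n t hC ht; exact ih hC (closedUnder_mono t (by omega) ht)
  | appL C s ih => intro n t hC ht; exact ⟨ih hC.1 ht, hC.2⟩
  | appR s C ih => intro n t hC ht; exact ⟨hC.1, ih hC.2 ht⟩
  | shift C ih => intro n t hC ht; exact ih hC (closedUnder_mono t (by omega) ht)
  | reset C ih => intro n t hC ht; exact ih hC ht

lemma howe_tauStar {a a'' : Tm} (hts : TauStar a a'') :
    ∀ {b : Tm}, Closed a → Closed b → Howe a b →
    ∃ b'', TauStar b b'' ∧ Howe a'' b'' ∧ Closed a'' ∧ Closed b'' := by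
  induction hts with
  | refl => intro b hca hcb hw; exact ⟨b, Relation.ReflTransGen.refl, hw, hca, hcb⟩
  | tail _ hstep ih =>
      intro b hca hcb hw
      obtain ⟨b'', hts'', hw'', hca'', hcb''⟩ := ih hca hcb hw
      obtain ⟨b3, hw3, hw4, hca3, hcb3⟩ :=
        howe_key hstep hca'' hcb'' hw'' (show LabHowe .tau .tau from trivial) trivial trivial
      exact ⟨b3, Relation.ReflTransGen.trans hts'' hw3, hw4, hca3, hcb3⟩

lemma closed_idval : Closed (lam (var 0)) := by show (0:ℕ) < 1; omega

lemma howe_evalsToValue {a b : Tm} (hca : Closed a) (hcb : Closed b) (hw : Howe a b)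
    (h : EvalsToValue a) : EvalsToValue b := by
  obtain ⟨v, hv, hred, hirr⟩ := h
  obtain ⟨c, rfl⟩ := hv
  obtain ⟨b'', hts, hw'', hca'', hcb''⟩ :=
    howe_tauStar (redStar_iff_tauStar.1 hred) hca hcb hw
  obtain ⟨b3, hwk, _, _, _⟩ := howe_key (Step.lamApp (v := lam (var 0)) ⟨_, rfl⟩)
    hca'' hcb'' hw''
    (show LabHowe (.val (lam (var 0))) (.val (lam (var 0)))
      from ⟨closed_idval, closed_idval, howe_refl _⟩)
    ⟨closed_idval, ⟨_, rfl⟩⟩ ⟨closed_idval, ⟨_, rfl⟩⟩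
  obtain ⟨u, hts2, hstep⟩ := hwk
  obtain ⟨c1, rfl, _, _⟩ := val_step_inv hstep
  refine ⟨lam c1, ⟨c1, rfl⟩, ?_, value_irred ⟨c1, rfl⟩⟩
  exact redStar_iff_tauStar.2 (Relation.ReflTransGen.trans hts hts2)

lemma howe_evalsToStuck {a b : Tm} (hca : Closed a) (hcb : Closed b) (hw : Howe a b)
    (h : EvalsToStuck a) : EvalsToStuck b := by
  obtain ⟨s, hs, hred, hirr⟩ := h
  obtain ⟨b'', hts, hw'', hca'', hcb''⟩ :=
    howe_tauStar (redStar_iff_tauStar.1 hred) hca hcb hw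
  obtain ⟨E₀, s0, rfl⟩ := closed_stuck_decomp hca'' hs
  have hstep0 := step_ctx_of_decomp E₀ s0 .hole
  obtain ⟨b3, hwk, _, _, _⟩ := howe_key hstep0 hca'' hcb'' hw''
    (show LabHowe (.ctx .hole) (.ctx .hole) from PCtxHowe.hole) trivial trivial
  obtain ⟨u, hts2, hstep⟩ := hwk
  obtain ⟨E₁, s1, rfl, _⟩ := ctx_step_inv hstep
  refine ⟨E₁.plug (shift s1), ctlstuck_stuck E₁ s1, ?_, ctlstuck_irred E₁ s1⟩
  exact redStar_iff_tauStar.2 (Relation.ReflTransGen.trans hts hts2)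

/-- soundness: bisimilarity implies contextual equivalence. -/
lemma bisim_ctxEquiv {t0 t1 : Tm} (hc0 : Closed t0) (hc1 : Closed t1)
    (h : Bisim t0 t1) : CtxEquiv t0 t1 := by
  intro C hC
  have hclo0 : Closed (C.plug t0) := ctx_plug_closedUnder C hC hc0
  have hclo1 : Closed (C.plug t1) := ctx_plug_closedUnder C hC hc1
  have hw01 : Howe (C.plug t0) (C.plug t1) := howe_ctx_plug h hc0 hc1 C
  have hw10 : Howe (C.plug t1) (C.plug t0) := howe_ctx_plug (bisim_symm h) hc1 hc0 C
  constructor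
  · exact ⟨fun hv => howe_evalsToValue hclo0 hclo1 hw01 hv,
      fun hv => howe_evalsToValue hclo1 hclo0 hw10 hv⟩
  · exact ⟨fun hv => howe_evalsToStuck hclo0 hclo1 hw01 hv,
      fun hv => howe_evalsToStuck hclo1 hclo0 hw10 hv⟩

/-! easy direction: evaluation contexts are closed general contexts -/

def ctxComp : Ctx → Ctx → Ctx
  | .hole, D => D
  | .lam C, D => .lam (ctxComp C D)
  | .appL C s, D => .appL (ctxComp C D) s
  | .appR s C, D => .appR s (ctxComp C D)
  | .shift C, D => .shift (ctxComp C D)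
  | .reset C, D => .reset (ctxComp C D)

lemma ctxComp_plug : ∀ (C D : Ctx) (t : Tm), (ctxComp C D).plug t = C.plug (D.plug t) := by
  intro C D t
  induction C with
  | hole => rfl
  | lam C ih => show Tm.lam _ = Tm.lam _; rw [ih]
  | appL C s ih => show Tm.app _ _ = Tm.app _ _; rw [ih]
  | appR s C ih => show Tm.app _ _ = Tm.app _ _; rw [ih]
  | shift C ih => show Tm.shift _ = Tm.shift _; rw [ih]
  | reset C ih => show Tm.reset _ = Tm.reset _; rw [ih]

lemma ctxComp_closed : ∀ (C : Ctx) {n : ℕ} {D : Ctx}, CtxClosedUnder n C →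
    (∀ m, CtxClosedUnder m D) → CtxClosedUnder n (ctxComp C D) := by
  intro C
  induction C with
  | hole => intro n D _ hD; exact hD n
  | lam C ih => intro n D hC hD; exact ih hC hD
  | appL C s ih => intro n D hC hD; exact ⟨ih hC.1 hD, hC.2⟩
  | appR s C ih => intro n D hC hD; exact ⟨hC.1, ih hC.2 hD⟩
  | shift C ih => intro n D hC hD; exact ih hC hD
  | reset C ih => intro n D hC hD; exact ih hC hD

lemma ectx_to_ctx : ∀ (F : ECtx), ClosedECtx F →
    ∃ C : Ctx, ClosedCtx C ∧ ∀ t, C.plug t = F.plug t := by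
  intro F
  induction F with
  | hole => exact fun _ => ⟨.hole, trivial, fun t => rfl⟩
  | appV b F ih =>
      intro hF
      obtain ⟨C, hC, he⟩ := ih hF.2
      refine ⟨ctxComp C (.appR (lam b) .hole), ?_, ?_⟩
      · refine ctxComp_closed C hC (fun m => ?_)
        exact ⟨closedUnder_mono b (by omega) hF.1, trivial⟩
      · intro t
        rw [ctxComp_plug]
        show C.plug (app (lam b) t) = _
        exact he _
  | appL F s ih =>
      intro hF
      obtain ⟨C, hC, he⟩ := ih hF.1
      refine ⟨ctxComp C (.appL .hole s), ?_, ?_⟩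
      · refine ctxComp_closed C hC (fun m => ?_)
        exact ⟨trivial, closedUnder_mono s (by omega) hF.2⟩
      · intro t
        rw [ctxComp_plug]
        exact he _
  | resetC F ih =>
      intro hF
      obtain ⟨C, hC, he⟩ := ih hF
      refine ⟨ctxComp C (.reset .hole), ?_, ?_⟩
      · exact ctxComp_closed C hC (fun m => trivial)
      · intro t
        rw [ctxComp_plug]
        exact he _

lemma ctxEquiv_ectxEquiv {t0 t1 : Tm} (h : CtxEquiv t0 t1) : ECtxEquiv t0 t1 := by
  intro F hF
  obtain ⟨C, hC, he⟩ := ectx_to_ctx F hF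
  have := h C hC
  rwa [he t0, he t1] at this

end LamS
open LamS LamS.Tm in
/-- context lemma: contextual equivalence, evaluation-context
    equivalence, and applicative bisimilarity coincide. -/
theorem context_lemma :
    ∀ t0 t1 : Tm, Closed t0 → Closed t1 →
      ((CtxEquiv t0 t1 ↔ ECtxEquiv t0 t1) ∧ (ECtxEquiv t0 t1 ↔ Bisim t0 t1)) := by
  intro t0 t1 hc0 hc1
  constructor
  · constructor
    · exact ctxEquiv_ectxEquiv
    · intro hE
      exact bisim_ctxEquiv hc0 hc1 (ectxEquiv_bisim hc0 hc1 hE)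
  · constructor
    · exact ectxEquiv_bisim hc0 hc1
    · intro hb
      exact ctxEquiv_ectxEquiv (bisim_ctxEquiv hc0 hc1 hb)
end

section
/- In λ_S, ⟨(λx.t0) ⟨t1⟩⟩ and (λx.⟨t0⟩) ⟨t1⟩ are applicatively bisimilar for all terms t0 (with fv(t0) ⊆ {x}) and closed t1. -/
namespace LamS

open Tm

/-- "Good" terms: lambdas or reset-terms. Closed under τ-steps and do no ctx-steps. -/
def GoodS (s : Tm) : Prop := (∃ b, s = Tm.lam b) ∨ (∃ w, s = Tm.reset w)

lemma ctx_step_reset : ∀ {a l a'}, Step a l a' → ∀ E : PCtx, l = .ctx E →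
    ∃ w, a' = Tm.reset w := by
  intro a l a' h
  induction h with
  | beta hv => intro E hE; cases hE
  | resetVal hv => intro E hE; cases hE
  | appL _ _ => intro E hE; cases hE
  | appR _ _ _ => intro E hE; cases hE
  | resetT _ _ => intro E hE; cases hE
  | resetCap _ _ => intro E hE; cases hE
  | lamApp hv => intro E hE; cases hE
  | shiftCap E => intro E' hE; exact ⟨_, rfl⟩
  | capL _ ih => intro E hE; exact ih _ rfl
  | capR _ ih => intro E hE; exact ih _ rfl

lemma good_no_ctx {s : Tm} {E : PCtx} {s' : Tm} (hg : GoodS s) :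
    ¬ Step s (.ctx E) s' := by
  rcases hg with ⟨b, rfl⟩ | ⟨w, rfl⟩ <;> intro h <;> cases h

lemma good_tau {s s' : Tm} (hg : GoodS s) (h : Step s .tau s') : GoodS s' := by
  rcases hg with ⟨b, rfl⟩ | ⟨w, rfl⟩
  · cases h
  · cases h with
    | resetVal hv => rcases hv with ⟨b, rfl⟩; exact Or.inl ⟨b, rfl⟩
    | resetT h' => exact Or.inr ⟨_, rfl⟩
    | resetCap h' => exact Or.inr (ctx_step_reset h' _ rfl)

/-- The candidate bisimulation. -/
def MyR (t u : Tm) : Prop :=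
  (∃ t0 s, GoodS s ∧ t = Tm.reset (Tm.app (Tm.lam t0) s) ∧
    u = Tm.app (Tm.lam (Tm.reset t0)) s) ∨ t = u

lemma step_weak {t : Tm} {l : Label} {t' : Tm} (h : Step t l t') : Weak t l t' := by
  cases l with
  | tau => exact Relation.ReflTransGen.single h
  | val v => exact ⟨t, Relation.ReflTransGen.refl, h⟩
  | ctx E => exact ⟨t, Relation.ReflTransGen.refl, h⟩

lemma myR_sim_left : ∀ ⦃t0 s : Tm⦄, GoodS s →
    ∀ ⦃l t'⦄, Step (Tm.reset (Tm.app (Tm.lam t0) s)) l t' →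
      ∃ u', Weak (Tm.app (Tm.lam (Tm.reset t0)) s) l u' ∧ MyR t' u' := by
  intro t0 s hg l t' h
  cases h with
  | resetVal hv => rcases hv with ⟨b, hb⟩; cases hb
  | resetT h' =>
      cases h' with
      | beta hv =>
          refine ⟨substT 0 s (Tm.reset t0), step_weak (Step.beta hv), Or.inr ?_⟩
          simp [substT]
      | appL h'' => cases h''
      | appR hv h'' =>
          exact ⟨Tm.app (Tm.lam (Tm.reset t0)) _,
            step_weak (Step.appR ⟨_, rfl⟩ h''),
            Or.inl ⟨t0, _, good_tau hg h'', rfl, rfl⟩⟩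
  | resetCap h' =>
      cases h' with
      | capL h'' => cases h''
      | capR h'' => exact absurd h'' (good_no_ctx hg)

lemma myR_sim_right : ∀ ⦃t0 s : Tm⦄, GoodS s →
    ∀ ⦃l t'⦄, Step (Tm.app (Tm.lam (Tm.reset t0)) s) l t' →
      ∃ u', Weak (Tm.reset (Tm.app (Tm.lam t0) s)) l u' ∧ MyR u' t' := by
  intro t0 s hg l t' h
  cases h with
  | beta hv =>
      refine ⟨Tm.reset (substT 0 s t0),
        step_weak (Step.resetT (Step.beta hv)), Or.inr ?_⟩
      simp [substT]
  | appL h'' => cases h''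
  | appR hv h'' =>
      exact ⟨Tm.reset (Tm.app (Tm.lam t0) _),
        step_weak (Step.resetT (Step.appR ⟨_, rfl⟩ h'')),
        Or.inl ⟨t0, _, good_tau hg h'', rfl, rfl⟩⟩
  | capL h'' => cases h''
  | capR h'' => exact absurd h'' (good_no_ctx hg)

lemma myR_isBisim : IsBisim MyR := by
  constructor
  · intro t u hR l t' h
    rcases hR with ⟨t0, s, hg, rfl, rfl⟩ | rfl
    · exact myR_sim_left hg h
    · exact ⟨t', step_weak h, Or.inr rfl⟩
  · intro t u hR l t' h
    rcases hR with ⟨t0, s, hg, rfl, rfl⟩ | rfl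
    · obtain ⟨u', hw, hr⟩ := myR_sim_right hg h
      exact ⟨u', hw, hr⟩
    · exact ⟨t', step_weak h, Or.inr rfl⟩

end LamS
open LamS LamS.Tm in
/-- ⟨(λx.t0) ⟨t1⟩⟩ ≈ (λx.⟨t0⟩) ⟨t1⟩. -/
theorem reset_lift_bisim :
    ∀ t0 t1 : Tm, ClosedUnder 1 t0 → Closed t1 →
      Bisim (reset (app (lam t0) (reset t1))) (app (lam (reset t0)) (reset t1)) := by
  intro t0 t1 _ _
  exact ⟨MyR, myR_isBisim, Or.inl ⟨t0, reset t1, Or.inr ⟨t1, rfl⟩, rfl, rfl⟩⟩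
end
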